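/- arXiv:1207.1557 — 5 statements merged into one kernel-verified Lean document; each statement's English description precedes it below -/
import Mathlib

section
/- Let (G,S) be a Coxeter system with word length function ℓ with respect to S. Fix a point c in the open fundamental chamber C of the Tits cone. For g ∈ G, the number of reflection hyperplanes Z in the family H = ∪_{g∈G, s∈S} g·Z_s that meet the closed segment [g·c, c] equals ℓ(g). -/
open scoped Real

/-- The Coxeter bilinear form on `V = ⊕_{s∈S} ℝ αs` (with `V = B → ℝ` and `αs = Pi.single s 1`):
`B(αs, αt) = -cos (π / m(s,t))`, interpreted as `-1` when `m(s,t) = ∞` (encoded by `0`)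
and `1` when `s = t`. -/
noncomputable def coxForm {B : Type*} [Fintype B] [DecidableEq B] (M : CoxeterMatrix B)
    (ξ η : B → ℝ) : ℝ :=
  ∑ s : B, ∑ t : B, ξ s * η t *
    (if s = t then 1 else if M s t = 0 then -1 else -Real.cos (π / (M s t : ℝ)))


set_option linter.unusedSectionVars false

section CoxAux

variable {B : Type*} [Fintype B] [DecidableEq B]

/-- entries of the Coxeter form -/
noncomputable def coxK (M : CoxeterMatrix B) (i j : B) : ℝ :=
  if i = j then 1 else if M i j = 0 then -1 else -Real.cos (π / (M i j : ℝ))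

variable {M : CoxeterMatrix B}

lemma coxK_diag (i : B) : coxK M i i = 1 := by simp [coxK]

lemma coxK_symm (i j : B) : coxK M i j = coxK M j i := by
  unfold coxK
  rcases eq_or_ne i j with rfl | h
  · simp
  · rw [if_neg h, if_neg (Ne.symm h), M.symmetric i j]

lemma coxK_nonpos_of_ne {i j : B} (h : i ≠ j) : coxK M i j ≤ 0 := by
  unfold coxK
  rw [if_neg h]
  split_ifs with h2
  · norm_num
  · have hm : 2 ≤ M i j := by
      rcases Nat.lt_or_ge (M i j) 2 with h3 | h3
      · interval_cases h4 : M i j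
        · exact absurd rfl h2
        · exact absurd h4 (M.off_diagonal i j h)
      · exact h3
    have h1 : (0:ℝ) < π / (M i j : ℝ) := by
      apply div_pos Real.pi_pos
      exact_mod_cast Nat.lt_of_lt_of_le Nat.zero_lt_two hm
    have h2 : π / (M i j : ℝ) ≤ π / 2 := by
      apply div_le_div_of_nonneg_left Real.pi_pos.le (by norm_num)
      exact_mod_cast hm
    have := Real.cos_nonneg_of_mem_Icc ⟨by linarith, h2⟩
    linarith

lemma coxForm_eq_sum (ξ η : B → ℝ) :
    coxForm M ξ η = ∑ s : B, ∑ t : B, ξ s * η t * coxK M s t := rfl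

lemma coxForm_single_left (i : B) (η : B → ℝ) :
    coxForm M (Pi.single i 1) η = ∑ t : B, η t * coxK M i t := by
  rw [coxForm_eq_sum]
  rw [Finset.sum_eq_single i]
  · simp
  · intro b _ hb
    simp [Pi.single_eq_of_ne hb]
  · simp

lemma coxForm_single_single (i j : B) :
    coxForm M (Pi.single i 1) (Pi.single j 1) = coxK M i j := by
  rw [coxForm_single_left, Finset.sum_eq_single j]
  · simp
  · intro b _ hb
    simp [Pi.single_eq_of_ne hb]
  · simp

lemma coxForm_symm (ξ η : B → ℝ) : coxForm M ξ η = coxForm M η ξ := by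
  rw [coxForm_eq_sum, coxForm_eq_sum, Finset.sum_comm]
  refine Finset.sum_congr rfl fun s _ => Finset.sum_congr rfl fun t _ => ?_
  rw [coxK_symm]; ring

lemma coxForm_add_right (ξ η η' : B → ℝ) :
    coxForm M ξ (η + η') = coxForm M ξ η + coxForm M ξ η' := by
  simp only [coxForm_eq_sum, ← Finset.sum_add_distrib]
  refine Finset.sum_congr rfl fun s _ => Finset.sum_congr rfl fun t _ => ?_
  simp [Pi.add_apply]; ring

lemma coxForm_smul_right (r : ℝ) (ξ η : B → ℝ) :
    coxForm M ξ (r • η) = r * coxForm M ξ η := by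
  simp only [coxForm_eq_sum, Finset.mul_sum]
  refine Finset.sum_congr rfl fun s _ => Finset.sum_congr rfl fun t _ => ?_
  simp [Pi.smul_apply, smul_eq_mul]; ring

lemma coxForm_sub_right (ξ η η' : B → ℝ) :
    coxForm M ξ (η - η') = coxForm M ξ η - coxForm M ξ η' := by
  have := coxForm_add_right (M := M) ξ (η - η') η'
  simp at this; linarith

lemma coxForm_add_left (ξ ξ' η : B → ℝ) :
    coxForm M (ξ + ξ') η = coxForm M ξ η + coxForm M ξ' η := by
  rw [coxForm_symm, coxForm_add_right, coxForm_symm η ξ, coxForm_symm η ξ']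

lemma coxForm_smul_left (r : ℝ) (ξ η : B → ℝ) :
    coxForm M (r • ξ) η = r * coxForm M ξ η := by
  rw [coxForm_symm, coxForm_smul_right, coxForm_symm η ξ]

lemma coxForm_sub_left (ξ ξ' η : B → ℝ) :
    coxForm M (ξ - ξ') η = coxForm M ξ η - coxForm M ξ' η := by
  rw [coxForm_symm, coxForm_sub_right, coxForm_symm η ξ, coxForm_symm η ξ']

end CoxAux

section CoxRho

open CoxeterSystem

variable {B : Type*} [Fintype B] [DecidableEq B] {W : Type*} [Group W]
  {M : CoxeterMatrix B} (cs : CoxeterSystem M W)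
  (ρ : W →* ((B → ℝ) ≃ₗ[ℝ] (B → ℝ)))
  (hρ : ∀ (s : B) (ξ : B → ℝ),
      ρ (cs.simple s) ξ = ξ - (2 * coxForm M (Pi.single s 1) ξ) • (Pi.single s (1:ℝ) : B → ℝ))

lemma rho_one_apply (ξ : B → ℝ) : ρ 1 ξ = ξ := by rw [map_one]; rfl

lemma rho_mul_apply (u v : W) (ξ : B → ℝ) : ρ (u * v) ξ = ρ u (ρ v ξ) := by
  rw [map_mul]; rfl

lemma rho_inv_cancel (w : W) (ξ : B → ℝ) : ρ w⁻¹ (ρ w ξ) = ξ := by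
  rw [← rho_mul_apply, inv_mul_cancel, rho_one_apply]

lemma rho_cancel_inv (w : W) (ξ : B → ℝ) : ρ w (ρ w⁻¹ ξ) = ξ := by
  rw [← rho_mul_apply, mul_inv_cancel, rho_one_apply]

include hρ

lemma rho_simple_single (p q : B) :
    ρ (cs.simple p) (Pi.single q 1) =
      Pi.single q 1 - (2 * coxK M p q) • (Pi.single p (1:ℝ) : B → ℝ) := by
  rw [hρ, coxForm_single_single]

lemma rho_simple_self (p : B) :
    ρ (cs.simple p) (Pi.single p 1) = -(Pi.single p (1:ℝ) : B → ℝ) := by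
  rw [rho_simple_single cs ρ hρ, coxK_diag]
  module

lemma coxForm_rho_simple (p : B) (ξ η : B → ℝ) :
    coxForm M (ρ (cs.simple p) ξ) (ρ (cs.simple p) η) = coxForm M ξ η := by
  rw [hρ, hρ, coxForm_sub_left, coxForm_sub_right, coxForm_sub_right,
    coxForm_smul_left, coxForm_smul_right, coxForm_smul_left, coxForm_smul_right,
    coxForm_single_single, coxK_diag, coxForm_symm ξ (Pi.single p 1)]
  ring

lemma coxForm_rho (w : W) (ξ η : B → ℝ) :
    coxForm M (ρ w ξ) (ρ w η) = coxForm M ξ η := by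
  induction w using cs.simple_induction_left with
  | one => rw [rho_one_apply, rho_one_apply]
  | mul_simple_left w i ih =>
      rw [rho_mul_apply, rho_mul_apply, coxForm_rho_simple cs ρ hρ, ih]

/-- coordinates outside `{i, j}` are fixed by the rank-two subgroup -/
lemma rho_dihedral_fix (i j : B) (u : W)
    (hu : u ∈ Subgroup.closure ({cs.simple i, cs.simple j} : Set W)) :
    ∀ (ξ : B → ℝ) (b : B), b ≠ i → b ≠ j → ρ u ξ b = ξ b := by
  induction hu using Subgroup.closure_induction with
  | mem x hx =>
      intro ξ b hbi hbj
      rcases hx with rfl | rfl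
      · rw [hρ]
        simp [Pi.single_eq_of_ne hbi]
      · rw [hρ]
        simp [Pi.single_eq_of_ne hbj]
  | one => intro ξ b _ _; rw [rho_one_apply]
  | mul u v _ _ ihu ihv =>
      intro ξ b hbi hbj
      rw [rho_mul_apply]
      rw [ihu _ b hbi hbj, ihv _ b hbi hbj]
  | inv u _ ihu =>
      intro ξ b hbi hbj
      have h1 := ihu (ρ u⁻¹ ξ) b hbi hbj
      rw [rho_cancel_inv] at h1
      exact h1.symm

end CoxRho

section Cheb

open scoped Real

/-- Chebyshev-like sequence -/
noncomputable def chebS (c : ℝ) : ℕ → ℝ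
  | 0 => 0
  | 1 => 1
  | (k+2) => 2*c*chebS c (k+1) - chebS c k

lemma chebS_one (k : ℕ) : chebS 1 k = k := by
  induction k using Nat.strong_induction_on with
  | _ k ih =>
    match k with
    | 0 => simp [chebS]
    | 1 => simp [chebS]
    | (k+2) =>
        rw [chebS, ih (k+1) (by omega), ih k (by omega)]
        push_cast; ring

lemma chebS_sin {m : ℕ} (hm : 2 ≤ m) (k : ℕ) :
    chebS (Real.cos (π/m)) k = Real.sin (k * (π/m)) / Real.sin (π/m) := by
  have hsin : Real.sin (π/m) ≠ 0 := by
    have hθpos : 0 < π/m := by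
      apply div_pos Real.pi_pos
      exact_mod_cast by omega
    have : 0 < Real.sin (π/m) := by
      apply Real.sin_pos_of_pos_of_lt_pi hθpos
      have : (2:ℝ) ≤ (m:ℝ) := by exact_mod_cast hm
      rw [div_lt_iff₀ (by linarith)]
      nlinarith [Real.pi_pos]
    exact this.ne'
  induction k using Nat.strong_induction_on with
  | _ k ih =>
    match k with
    | 0 => simp [chebS]
    | 1 => simp [chebS, div_self hsin]
    | (k+2) =>
        rw [chebS, ih (k+1) (by omega), ih k (by omega)]
        have key : Real.sin (((k:ℝ)+2) * (π/m)) =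
            2 * Real.cos (π/m) * Real.sin (((k:ℝ)+1) * (π/m)) - Real.sin ((k:ℝ) * (π/m)) := by
          have h1 : ((k:ℝ)+2) * (π/m) = ((k:ℝ)+1) * (π/m) + (π/m) := by ring
          have h2 : ((k:ℝ)) * (π/m) = ((k:ℝ)+1) * (π/m) - (π/m) := by ring
          rw [h1, h2, Real.sin_add, Real.sin_sub]
          ring
        push_cast
        rw [key]
        ring

lemma chebS_nonneg {m : ℕ} (hm : m ≠ 1) (k : ℕ) (hk : m = 0 ∨ k ≤ m) :
    0 ≤ chebS (if m = 0 then 1 else Real.cos (π/m)) k := by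
  rcases eq_or_ne m 0 with rfl | hm0
  · rw [if_pos rfl, chebS_one]
    positivity
  · have hm2 : 2 ≤ m := by omega
    rw [if_neg hm0, chebS_sin hm2]
    have hθpos : 0 < π/m := by
      apply div_pos Real.pi_pos
      exact_mod_cast by omega
    have hθle : (π/m) ≤ π/2 := by
      apply div_le_div_of_nonneg_left Real.pi_pos.le (by norm_num)
      exact_mod_cast hm2
    have hsinθ : 0 < Real.sin (π/m) := by
      apply Real.sin_pos_of_pos_of_lt_pi hθpos
      linarith [Real.pi_pos]
    apply div_nonneg _ hsinθ.le
    apply Real.sin_nonneg_of_nonneg_of_le_pi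
    · positivity
    · have h : k ≤ m := hk.resolve_left hm0
      calc (k:ℝ) * (π/m) ≤ (m:ℝ) * (π/m) := by
             apply mul_le_mul_of_nonneg_right _ hθpos.le
             exact_mod_cast h
        _ = π := by field_simp

end Cheb
section CoxAlt

open CoxeterSystem
open scoped Real

variable {B : Type*} [Fintype B] [DecidableEq B] {W : Type*} [Group W]
  {M : CoxeterMatrix B} (cs : CoxeterSystem M W)
  (ρ : W →* ((B → ℝ) ≃ₗ[ℝ] (B → ℝ)))
  (hρ : ∀ (s : B) (ξ : B → ℝ),
      ρ (cs.simple s) ξ = ξ - (2 * coxForm M (Pi.single s 1) ξ) • (Pi.single s (1:ℝ) : B → ℝ))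

lemma coxK_eq_neg {i j : B} (hij : i ≠ j) :
    coxK M i j = -(if M i j = 0 then 1 else Real.cos (π / (M i j : ℝ))) := by
  unfold coxK
  rw [if_neg hij]
  split_ifs <;> norm_num

/-- positivity predicate -/
def coxPos (ξ : B → ℝ) : Prop := ∀ b, 0 ≤ ξ b

lemma coxPos_single (i : B) : coxPos (Pi.single i (1:ℝ) : B → ℝ) := by
  intro b
  rcases eq_or_ne b i with rfl | h
  · simp
  · simp [Pi.single_eq_of_ne h]

include hρ

lemma rho_alt (i j : B) (hij : i ≠ j) (c : ℝ)
    (hc : c = if M i j = 0 then 1 else Real.cos (π / (M i j : ℝ))) (k : ℕ) :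
    ρ (cs.wordProd (CoxeterSystem.alternatingWord i j k)) (Pi.single i 1) =
      if Even k then
        chebS c (k+1) • (Pi.single i (1:ℝ) : B → ℝ) + chebS c k • (Pi.single j (1:ℝ) : B → ℝ)
      else
        chebS c (k+1) • (Pi.single j (1:ℝ) : B → ℝ) + chebS c k • (Pi.single i (1:ℝ) : B → ℝ) := by
  have hKij : coxK M i j = -c := by rw [coxK_eq_neg hij, hc]
  have hKji : coxK M j i = -c := by rw [coxK_symm]; exact hKij
  induction k with
  | zero =>
      rw [show CoxeterSystem.alternatingWord i j 0 = [] from rfl, cs.wordProd_nil,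
        rho_one_apply, if_pos Even.zero]
      simp [chebS]
  | succ k ih =>
      rw [CoxeterSystem.alternatingWord_succ', cs.wordProd_cons, rho_mul_apply, ih]
      have hS2 : ∀ l : ℕ, chebS c (l + 2) = 2*c*chebS c (l+1) - chebS c l := fun l => rfl
      rcases Nat.even_or_odd k with hk | hk
      · rw [if_pos hk, if_pos hk, if_neg (by simp [Nat.even_add_one, hk])]
        rw [map_add, map_smul, map_smul, rho_simple_single cs ρ hρ, rho_simple_single cs ρ hρ,
          hKji, coxK_diag]
        rw [show k + 1 + 1 = k + 2 from rfl, hS2 k]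
        module
      · rw [if_neg (Nat.not_even_iff_odd.mpr hk), if_neg (Nat.not_even_iff_odd.mpr hk),
          if_pos (by simp [Nat.even_add_one, Nat.not_even_iff_odd.mpr hk])]
        rw [map_add, map_smul, map_smul, rho_simple_single cs ρ hρ, rho_simple_single cs ρ hρ,
          hKij, coxK_diag]
        rw [show k + 1 + 1 = k + 2 from rfl, hS2 k]
        module

/-- extraction of alternating words using the inductive hypothesis -/
lemma alt_extract (n : ℕ)
    (IH : ∀ x : W, cs.length x < n → ∀ p : B,
      cs.length x < cs.length (x * cs.simple p) → coxPos (ρ x (Pi.single p 1)))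
    (k : ℕ) :
    ∀ i j : B, i ≠ j → ∀ w : W,
      w ∈ Subgroup.closure ({cs.simple i, cs.simple j} : Set W) →
      cs.length w = k → k < n → cs.length w < cs.length (w * cs.simple j) →
      w = cs.wordProd (CoxeterSystem.alternatingWord j i k) := by
  induction k with
  | zero =>
      intro i j hij w _ hlen _ _
      have : w = 1 := cs.length_eq_zero_iff.mp hlen
      simp [this, CoxeterSystem.alternatingWord]
  | succ k ihk =>
      intro i j hij w hmem hlen hkn hnd
      have hw1 : w ≠ 1 := by
        intro h
        rw [h] at hlen
        simp at hlen
      -- all right descents of w lie in {i, j}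
      have hdesc : ∀ l : B, cs.IsRightDescent w l → l = i ∨ l = j := by
        intro l hl
        have hl' : cs.length (w * cs.simple l) < cs.length w := hl
        by_contra hcon
        push_neg at hcon
        obtain ⟨hli, hlj⟩ := hcon
        have h1 : cs.length (w * cs.simple l) + 1 = cs.length w :=
          (cs.length_mul_simple w l).resolve_left (by omega)
        have h2 : cs.length (w * cs.simple l) < n := by omega
        have h3 : cs.length (w * cs.simple l) <
            cs.length ((w * cs.simple l) * cs.simple l) := by
          rw [mul_assoc, cs.simple_mul_simple_self, mul_one]
          omega
        have hpos := IH (w * cs.simple l) h2 l h3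
        -- now ρ w (single l 1) = - ρ (w * s l) (single l 1)
        have hval : ρ w (Pi.single l 1) = -(ρ (w * cs.simple l) (Pi.single l 1)) := by
          have : w = (w * cs.simple l) * cs.simple l := by
            rw [mul_assoc, cs.simple_mul_simple_self, mul_one]
          rw [this, rho_mul_apply, rho_simple_self cs ρ hρ, map_neg]
          rw [← this]
        have hfix : ρ w (Pi.single l 1) l = (Pi.single l (1:ℝ) : B → ℝ) l :=
          rho_dihedral_fix cs ρ hρ i j w hmem _ l hli hlj
        rw [Pi.single_eq_same] at hfix
        have := hpos l
        rw [hval] at hfix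
        simp only [Pi.neg_apply] at hfix
        linarith
      obtain ⟨l, hl⟩ := cs.exists_rightDescent_of_ne_one hw1
      have hl' : cs.length (w * cs.simple l) < cs.length w := hl
      have hlij := hdesc l hl
      have hli : l = i := by
        rcases hlij with h | h
        · exact h
        · exfalso
          rw [h] at hl'
          omega
      subst hli
      -- recurse on w * s i
      have hmem' : w * cs.simple l ∈
          Subgroup.closure ({cs.simple l, cs.simple j} : Set W) := by
        exact mul_mem hmem (Subgroup.subset_closure (by simp))
      have hlen' : cs.length (w * cs.simple l) = k := by
        have := (cs.length_mul_simple w l).resolve_left (by omega)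
        omega
      have hnd' : cs.length (w * cs.simple l) <
          cs.length ((w * cs.simple l) * cs.simple l) := by
        rw [mul_assoc, cs.simple_mul_simple_self, mul_one]
        omega
      have hmem'' : w * cs.simple l ∈
          Subgroup.closure ({cs.simple j, cs.simple l} : Set W) := by
        rwa [Set.pair_comm]
      have hrec := ihk j l hij.symm (w * cs.simple l) hmem'' hlen' (by omega) hnd'
      have hw : w = (w * cs.simple l) * cs.simple l := by
        rw [mul_assoc, cs.simple_mul_simple_self, mul_one]
      rw [hw, hrec, ← cs.wordProd_concat, ← CoxeterSystem.alternatingWord_succ]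

end CoxAlt
section CoxMain

open CoxeterSystem
open scoped Real

variable {B : Type*} [Fintype B] [DecidableEq B] {W : Type*} [Group W]
  {M : CoxeterMatrix B} (cs : CoxeterSystem M W)
  (ρ : W →* ((B → ℝ) ≃ₗ[ℝ] (B → ℝ)))
  (hρ : ∀ (s : B) (ξ : B → ℝ),
      ρ (cs.simple s) ξ = ξ - (2 * coxForm M (Pi.single s 1) ξ) • (Pi.single s (1:ℝ) : B → ℝ))

lemma coxPos_comb {a b : ℝ} (ha : 0 ≤ a) (hb : 0 ≤ b) (x y : B) :
    coxPos (a • (Pi.single x (1:ℝ) : B → ℝ) + b • (Pi.single y (1:ℝ) : B → ℝ)) := by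
  intro b'
  have h1 := coxPos_single x b'
  have h2 := coxPos_single y b'
  simp only [Pi.add_apply, Pi.smul_apply, smul_eq_mul]
  have := mul_nonneg ha h1
  have := mul_nonneg hb h2
  linarith

include hρ

theorem coxPos_main : ∀ n : ℕ, ∀ w : W, cs.length w = n →
    ∀ i : B, cs.length w < cs.length (w * cs.simple i) → coxPos (ρ w (Pi.single i 1)) := by
  classical
  intro n
  induction n using Nat.strong_induction_on with
  | _ n IHn =>
    have IH : ∀ x : W, cs.length x < n → ∀ p : B,
        cs.length x < cs.length (x * cs.simple p) → coxPos (ρ x (Pi.single p 1)) := by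
      intro x hx p hp
      exact IHn (cs.length x) hx x rfl p hp
    intro w hlen i hgt
    rcases eq_or_ne w 1 with rfl | hw1
    · rw [rho_one_apply]
      exact coxPos_single i
    obtain ⟨j, hj⟩ := cs.exists_rightDescent_of_ne_one hw1
    have hj' : cs.length (w * cs.simple j) < cs.length w := hj
    have hij : i ≠ j := by
      intro h
      rw [h] at hgt
      omega
    set Wd : Subgroup W := Subgroup.closure ({cs.simple i, cs.simple j} : Set W) with hWd
    have hsiWd : cs.simple i ∈ Wd := Subgroup.subset_closure (by simp)
    have hsjWd : cs.simple j ∈ Wd := Subgroup.subset_closure (by simp)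
    set A : Set W := {v : W | v⁻¹ * w ∈ Wd ∧ cs.length v + cs.length (v⁻¹ * w) = n} with hA
    have hwA : w ∈ A := by
      constructor
      · rw [inv_mul_cancel]; exact one_mem _
      · rw [inv_mul_cancel]; simp [hlen]
    have hex : ∃ m : ℕ, ∃ v ∈ A, cs.length v = m := ⟨n, w, hwA, hlen⟩
    obtain ⟨v, hvA, hvlen⟩ := Nat.find_spec hex
    have hvmin : ∀ v' ∈ A, Nat.find hex ≤ cs.length v' :=
      fun v' h' => Nat.find_min' hex ⟨v', h', rfl⟩
    obtain ⟨huWd, hsum⟩ := hvA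
    have hvu : w = v * (v⁻¹ * w) := (mul_inv_cancel_left v w).symm
    have hvp : ∀ p : B, cs.simple p ∈ ({cs.simple i, cs.simple j} : Set W) →
        cs.length v < cs.length (v * cs.simple p) := by
      intro p hp
      by_contra hle
      push_neg at hle
      have hne := cs.length_mul_simple_ne v p
      have hlt : cs.length (v * cs.simple p) + 1 = cs.length v :=
        (cs.length_mul_simple v p).resolve_left (by omega)
      have hmem2 : (v * cs.simple p)⁻¹ * w ∈ Wd := by
        rw [mul_inv_rev, cs.inv_simple, mul_assoc]
        exact mul_mem (Subgroup.subset_closure hp) huWd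
      have heq : (v * cs.simple p)⁻¹ * w = cs.simple p * (v⁻¹ * w) := by
        rw [mul_inv_rev, cs.inv_simple, mul_assoc]
      have hub : cs.length ((v * cs.simple p)⁻¹ * w) ≤ cs.length (v⁻¹ * w) + 1 := by
        rw [heq]
        have := cs.length_mul_le (cs.simple p) (v⁻¹ * w)
        rw [cs.length_simple] at this
        omega
      have hlb : n ≤ cs.length (v * cs.simple p) + cs.length ((v * cs.simple p)⁻¹ * w) := by
        have := cs.length_mul_le (v * cs.simple p) ((v * cs.simple p)⁻¹ * w)
        rw [mul_inv_cancel_left] at this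
        omega
      have hA' : (v * cs.simple p) ∈ A := by
        constructor
        · exact hmem2
        · omega
      have := hvmin _ hA'
      omega
    have hvi : cs.length v < cs.length (v * cs.simple i) := hvp i (by simp)
    have hvj : cs.length v < cs.length (v * cs.simple j) := hvp j (by simp)
    rcases eq_or_ne v 1 with hv1 | hv1
    · -- w itself lies in the dihedral subgroup
      have hwWd : w ∈ Wd := by
        rw [hv1] at huWd
        simpa using huWd
      have hn1 : 1 ≤ n := by
        rcases Nat.eq_zero_or_pos n with h0 | h
        · exact absurd (cs.length_eq_zero_iff.mp (hlen.trans h0)) hw1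
        · exact h
      have hlenj : cs.length (w * cs.simple j) + 1 = n := by
        rcases cs.length_mul_simple w j with h | h
        · omega
        · omega
      have hmemj : w * cs.simple j ∈ Wd := mul_mem hwWd hsjWd
      have hww : (w * cs.simple j) * cs.simple j = w := by
        rw [mul_assoc, cs.simple_mul_simple_self, mul_one]
      have hndj : cs.length (w * cs.simple j) < cs.length ((w * cs.simple j) * cs.simple j) := by
        rw [hww]
        omega
      have hrec := alt_extract cs ρ hρ n IH (n-1) i j hij (w * cs.simple j) hmemj
        (by omega) (by omega) hndj
      have hn' : n - 1 + 1 = n := by omega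
      have hwalt : w = cs.wordProd (CoxeterSystem.alternatingWord i j n) := by
        rw [← hn', CoxeterSystem.alternatingWord_succ, cs.wordProd_concat, ← hrec, hww]
      have hred : cs.IsReduced (CoxeterSystem.alternatingWord i j n) := by
        unfold CoxeterSystem.IsReduced
        rw [← hwalt, hlen, CoxeterSystem.length_alternatingWord]
      have hnm : M.M i j = 0 ∨ n + 1 ≤ M.M i j := by
        rcases eq_or_ne (M.M i j) 0 with h0 | h0
        · exact Or.inl h0
        · right
          have hle : n ≤ M.M i j := by
            by_contra hgt'
            exact (cs.not_isReduced_alternatingWord i j h0 (by omega)) hred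
          rcases Nat.lt_or_ge n (M.M i j) with h | h
          · omega
          · exfalso
            have hnMij : n = M.M i j := by omega
            have hbraid := cs.wordProd_braidWord_eq i j
            have hw2 : w = cs.wordProd (CoxeterSystem.alternatingWord j i n) := by
              rw [hwalt]
              unfold CoxeterSystem.braidWord at hbraid
              rw [hnMij, hbraid, M.symmetric i j]
            have hws : w * cs.simple i = cs.wordProd (CoxeterSystem.alternatingWord i j (n-1)) := by
              rw [hw2, ← hn', CoxeterSystem.alternatingWord_succ,
                cs.wordProd_concat, mul_assoc, cs.simple_mul_simple_self, mul_one]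
              have h9 : n - 1 + 1 - 1 = n - 1 := by omega
              rw [h9]
            have : cs.length (w * cs.simple i) ≤ n - 1 := by
              rw [hws]
              have := cs.length_wordProd_le (CoxeterSystem.alternatingWord i j (n-1))
              rwa [CoxeterSystem.length_alternatingWord] at this
            omega
      set c : ℝ := if M.M i j = 0 then 1 else Real.cos (π / (M.M i j : ℝ)) with hc
      have hform := rho_alt cs ρ hρ i j hij c hc n
      rw [← hwalt] at hform
      have hMne1 : M.M i j ≠ 1 := M.off_diagonal i j hij
      have hS1 : 0 ≤ chebS c (n+1) := by
        rw [hc]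
        exact chebS_nonneg hMne1 (n+1) (by omega)
      have hS0 : 0 ≤ chebS c n := by
        rw [hc]
        exact chebS_nonneg hMne1 n (by omega)
      rw [hform]
      split_ifs
      · exact coxPos_comb hS1 hS0 i j
      · exact coxPos_comb hS1 hS0 j i
    · -- v ≠ 1
      have hune : v⁻¹ * w ≠ 1 := by
        intro h
        rw [h, mul_one] at hvu
        rw [← hvu] at hvj
        omega
      have hulen : 1 ≤ cs.length (v⁻¹ * w) := by
        rcases Nat.eq_zero_or_pos (cs.length (v⁻¹ * w)) with h0 | h
        · exact absurd (cs.length_eq_zero_iff.mp h0) hune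
        · exact h
      have hvlen1 : 1 ≤ cs.length v := by
        rcases Nat.eq_zero_or_pos (cs.length v) with h0 | h
        · exact absurd (cs.length_eq_zero_iff.mp h0) hv1
        · exact h
      have hulenlt : cs.length (v⁻¹ * w) < n := by omega
      have hvlenlt : cs.length v < n := by omega
      have hweq : v * (v⁻¹ * w * cs.simple i) = w * cs.simple i := by
        rw [← mul_assoc, mul_inv_cancel_left]
      have hus : cs.length (v⁻¹ * w) < cs.length ((v⁻¹ * w) * cs.simple i) := by
        have h1 := cs.length_mul_le v (v⁻¹ * w * cs.simple i)
        rw [hweq] at h1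
        omega
      have hposu := IH (v⁻¹ * w) hulenlt i hus
      have hposvi := IH v hvlenlt i hvi
      have hposvj := IH v hvlenlt j hvj
      obtain ⟨lam, mu, hposl, hposm, hxdecomp⟩ : ∃ lam mu : ℝ, 0 ≤ lam ∧ 0 ≤ mu ∧
          ρ (v⁻¹ * w) (Pi.single i 1) =
            lam • (Pi.single i (1:ℝ) : B → ℝ) + mu • (Pi.single j (1:ℝ) : B → ℝ) := by
        refine ⟨ρ (v⁻¹ * w) (Pi.single i 1) i, ρ (v⁻¹ * w) (Pi.single i 1) j,
          hposu i, hposu j, ?_⟩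
        funext b
        rcases eq_or_ne b i with rfl | hbi
        · simp [Pi.single_eq_of_ne hij]
        · rcases eq_or_ne b j with rfl | hbj
          · simp [Pi.single_eq_of_ne (Ne.symm hij)]
          · have h0 := rho_dihedral_fix cs ρ hρ i j (v⁻¹ * w) huWd (Pi.single i 1) b hbi hbj
            rw [Pi.single_eq_of_ne hbi] at h0
            rw [Pi.add_apply, Pi.smul_apply, Pi.smul_apply, Pi.single_eq_of_ne hbi,
              Pi.single_eq_of_ne hbj, h0]
            simp
      have hfinal : ρ w (Pi.single i 1) =
          lam • (ρ v (Pi.single i 1)) + mu • (ρ v (Pi.single j 1)) := by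
        conv_lhs => rw [hvu, rho_mul_apply, hxdecomp]
        rw [map_add, map_smul, map_smul]
      rw [hfinal]
      intro b
      have h1 := hposvi b
      have h2 := hposvj b
      simp only [Pi.add_apply, Pi.smul_apply, smul_eq_mul]
      have := mul_nonneg hposl h1
      have := mul_nonneg hposm h2
      linarith

end CoxMain
section CoxRoots

open CoxeterSystem
open scoped Real

variable {B : Type*} [Fintype B] [DecidableEq B] {W : Type*} [Group W]
  {M : CoxeterMatrix B} (cs : CoxeterSystem M W)
  (ρ : W →* ((B → ℝ) ≃ₗ[ℝ] (B → ℝ)))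
  (hρ : ∀ (s : B) (ξ : B → ℝ),
      ρ (cs.simple s) ξ = ξ - (2 * coxForm M (Pi.single s 1) ξ) • (Pi.single s (1:ℝ) : B → ℝ))

/-- negativity predicate -/
def coxNeg (ξ : B → ℝ) : Prop := ∀ b, ξ b ≤ 0

lemma coxPos_coxNeg_eq_zero {ξ : B → ℝ} (h1 : coxPos ξ) (h2 : coxNeg ξ) : ξ = 0 := by
  funext b
  exact le_antisymm (h2 b) (h1 b)

lemma single_ne_zero' (i : B) : (Pi.single i (1:ℝ) : B → ℝ) ≠ 0 := by
  intro h
  have := congrFun h i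
  simp at this

lemma rho_root_ne_zero (w : W) (i : B) : ρ w (Pi.single i 1) ≠ (0 : B → ℝ) := by
  intro h
  have h2 : ρ w⁻¹ (ρ w (Pi.single i 1)) = ρ w⁻¹ (0 : B → ℝ) := by rw [h]
  rw [rho_inv_cancel, map_zero] at h2
  exact single_ne_zero' i h2

include hρ

lemma coxPos_of_lt (w : W) (i : B) (h : cs.length w < cs.length (w * cs.simple i)) :
    coxPos (ρ w (Pi.single i 1)) :=
  coxPos_main cs ρ hρ (cs.length w) w rfl i h

lemma coxNeg_of_gt (w : W) (i : B) (h : cs.length (w * cs.simple i) < cs.length w) :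
    coxNeg (ρ w (Pi.single i 1)) := by
  have hw : w = (w * cs.simple i) * cs.simple i := by
    rw [mul_assoc, cs.simple_mul_simple_self, mul_one]
  have h2 : cs.length (w * cs.simple i) <
      cs.length ((w * cs.simple i) * cs.simple i) := by
    rw [← hw]
    exact h
  have hpos := coxPos_of_lt cs ρ hρ (w * cs.simple i) i h2
  have hval : ρ w (Pi.single i 1) = -(ρ (w * cs.simple i) (Pi.single i 1)) := by
    conv_lhs => rw [hw]
    rw [rho_mul_apply, rho_simple_self cs ρ hρ, map_neg]
  rw [hval]
  intro b
  simp only [Pi.neg_apply]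
  linarith [hpos b]

lemma coxPos_or_coxNeg (w : W) (i : B) :
    coxPos (ρ w (Pi.single i 1)) ∨ coxNeg (ρ w (Pi.single i 1)) := by
  rcases Nat.lt_or_ge (cs.length w) (cs.length (w * cs.simple i)) with h | h
  · exact Or.inl (coxPos_of_lt cs ρ hρ w i h)
  · have hne := cs.length_mul_simple_ne w i
    exact Or.inr (coxNeg_of_gt cs ρ hρ w i (by omega))

lemma root_norm_one (w : W) (i : B) :
    coxForm M (ρ w (Pi.single i 1)) (ρ w (Pi.single i 1)) = 1 := by
  rw [coxForm_rho cs ρ hρ, coxForm_single_single, coxK_diag]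

/-- `s i` permutes the positive roots other than `α_i` -/
lemma simple_perm_pos (w : W) (l : B) (i : B)
    (hpos : coxPos (ρ w (Pi.single l 1)))
    (hne : ρ w (Pi.single l 1) ≠ (Pi.single i 1 : B → ℝ)) :
    coxPos (ρ (cs.simple i) (ρ w (Pi.single l 1))) := by
  have hmul : ρ (cs.simple i) (ρ w (Pi.single l 1)) = ρ (cs.simple i * w) (Pi.single l 1) :=
    (rho_mul_apply ρ _ _ _).symm
  rcases coxPos_or_coxNeg cs ρ hρ (cs.simple i * w) l with h | h
  · rwa [hmul]
  · exfalso
    have hcoord : ∀ b, b ≠ i → ρ w (Pi.single l 1) b = 0 := by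
      intro b hb
      have h1 : ρ (cs.simple i) (ρ w (Pi.single l 1)) b = ρ w (Pi.single l 1) b := by
        rw [hρ]
        simp [Pi.single_eq_of_ne hb]
      have h2 : ρ (cs.simple i) (ρ w (Pi.single l 1)) b ≤ 0 := by
        rw [hmul]
        exact h b
      have h3 := hpos b
      rw [h1] at h2
      linarith
    have hdecomp : ρ w (Pi.single l 1) =
        (ρ w (Pi.single l 1) i) • (Pi.single i (1:ℝ) : B → ℝ) := by
      funext b
      rcases eq_or_ne b i with rfl | hb
      · simp
      · rw [hcoord b hb]
        simp [Pi.single_eq_of_ne hb]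
    have hnorm := root_norm_one cs ρ hρ w l
    rw [hdecomp, coxForm_smul_left, coxForm_smul_right, coxForm_single_single, coxK_diag,
      mul_one] at hnorm
    have h4 : (ρ w (Pi.single l 1) i - 1) * (ρ w (Pi.single l 1) i + 1) = 0 := by nlinarith
    rcases mul_eq_zero.mp h4 with h5 | h5
    · apply hne
      rw [hdecomp, show ρ w (Pi.single l 1) i = 1 by linarith, one_smul]
    · have := hpos i
      linarith

end CoxRoots

section CoxCount

open CoxeterSystem
open scoped Real

variable {B : Type*} [Fintype B] [DecidableEq B] {W : Type*} [Group W]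
  {M : CoxeterMatrix B} (cs : CoxeterSystem M W)
  (ρ : W →* ((B → ℝ) ≃ₗ[ℝ] (B → ℝ)))
  (hρ : ∀ (s : B) (ξ : B → ℝ),
      ρ (cs.simple s) ξ = ξ - (2 * coxForm M (Pi.single s 1) ξ) • (Pi.single s (1:ℝ) : B → ℝ))

/-- the set of positive roots sent to negative roots by `g⁻¹` -/
def coxNSet (ρ : W →* ((B → ℝ) ≃ₗ[ℝ] (B → ℝ))) (g : W) : Set (B → ℝ) :=
  {β | (∃ w l, β = ρ w (Pi.single l 1)) ∧ coxPos β ∧ coxNeg (ρ g⁻¹ β)}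

include hρ

lemma coxNSet_one : coxNSet ρ (1 : W) = ∅ := by
  ext β
  simp only [coxNSet, Set.mem_setOf_eq, Set.mem_empty_iff_false, iff_false]
  rintro ⟨⟨w, l, rfl⟩, hpos, hneg⟩
  rw [inv_one] at hneg
  have : ρ (1:W) (ρ w (Pi.single l 1)) = ρ w (Pi.single l 1) := rho_one_apply ρ _
  rw [this] at hneg
  exact rho_root_ne_zero ρ w l (coxPos_coxNeg_eq_zero hpos hneg)

lemma coxNSet_insert (g : W) (i : B) (hd : cs.length (cs.simple i * g) < cs.length g) :
    coxNSet ρ g =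
      insert (Pi.single i 1) ((fun ξ => ρ (cs.simple i) ξ) '' coxNSet ρ (cs.simple i * g)) := by
  have hginv : (cs.simple i * g)⁻¹ = g⁻¹ * cs.simple i := by
    rw [mul_inv_rev, cs.inv_simple]
  have hcomp : ∀ ξ : B → ℝ, ρ (cs.simple i * g)⁻¹ ξ = ρ g⁻¹ (ρ (cs.simple i) ξ) := by
    intro ξ
    rw [hginv, rho_mul_apply]
  have hss : ∀ ξ : B → ℝ, ρ (cs.simple i) (ρ (cs.simple i) ξ) = ξ := by
    intro ξ
    rw [← rho_mul_apply, cs.simple_mul_simple_self, rho_one_apply]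
  ext β
  constructor
  · rintro ⟨⟨w, l, hβ⟩, hpos, hneg⟩
    rcases eq_or_ne β (Pi.single i 1 : B → ℝ) with rfl | hne
    · exact Set.mem_insert _ _
    · refine Set.mem_insert_of_mem _ ⟨ρ (cs.simple i) β, ⟨⟨cs.simple i * w, l, ?_⟩, ?_, ?_⟩, ?_⟩
      · rw [rho_mul_apply, hβ]
      · rw [hβ] at hpos hne ⊢
        exact simple_perm_pos cs ρ hρ w l i hpos hne
      · rw [hcomp (ρ (cs.simple i) β), hss]
        exact hneg
      · exact hss β
  · intro hβ
    rcases Set.mem_insert_iff.mp hβ with rfl | ⟨β', hβ', rfl⟩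
    · refine ⟨⟨1, i, (rho_one_apply ρ _).symm⟩, coxPos_single i, ?_⟩
      have hlen : cs.length (g⁻¹ * cs.simple i) < cs.length g⁻¹ := by
        rw [← hginv, cs.length_inv, cs.length_inv]
        exact hd
      exact coxNeg_of_gt cs ρ hρ g⁻¹ i hlen
    · obtain ⟨⟨w, l, hβrep⟩, hpos', hneg'⟩ := hβ'
      -- β' is a positive root of (s i * g), and β' ≠ α_i
      have hne' : β' ≠ (Pi.single i 1 : B → ℝ) := by
        rintro rfl
        -- coxNeg (ρ (s i * g)⁻¹ α_i) is impossible
        have hlen2 : cs.length ((cs.simple i * g)⁻¹ * cs.simple i) >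
            cs.length (cs.simple i * g)⁻¹ := by
          rw [hginv]
          have h1 : g⁻¹ * cs.simple i * cs.simple i = g⁻¹ := by
            rw [mul_assoc, cs.simple_mul_simple_self, mul_one]
          rw [h1, cs.length_inv]
          have h2 : cs.length (g⁻¹ * cs.simple i) = cs.length (cs.simple i * g) := by
            rw [← hginv, cs.length_inv]
          rw [h2]
          exact hd
        have hposα := coxPos_of_lt cs ρ hρ (cs.simple i * g)⁻¹ i hlen2
        have := coxPos_coxNeg_eq_zero hposα hneg'
        exact rho_root_ne_zero ρ (cs.simple i * g)⁻¹ i this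
      refine ⟨⟨cs.simple i * w, l, ?_⟩, ?_, ?_⟩
      · rw [rho_mul_apply, hβrep]
      · rw [hβrep] at hpos' hne' ⊢
        exact simple_perm_pos cs ρ hρ w l i hpos' hne'
      · rw [← hcomp β']
        exact hneg'

lemma coxNSet_card : ∀ n : ℕ, ∀ g : W, cs.length g = n →
    (coxNSet ρ g).Finite ∧ (coxNSet ρ g).ncard = n := by
  intro n
  induction n with
  | zero =>
      intro g hg
      rw [cs.length_eq_zero_iff.mp hg, coxNSet_one cs ρ hρ]
      simp
  | succ n ih =>
      intro g hg
      have hg1 : g ≠ 1 := by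
        intro h
        rw [h] at hg
        simp at hg
      obtain ⟨i, hi⟩ := cs.exists_leftDescent_of_ne_one hg1
      have hi' : cs.length (cs.simple i * g) < cs.length g := hi
      have hlen' : cs.length (cs.simple i * g) = n := by
        rcases cs.length_simple_mul g i with h | h
        · omega
        · omega
      obtain ⟨hfin', hcard'⟩ := ih (cs.simple i * g) hlen'
      have hkey := coxNSet_insert cs ρ hρ g i hi'
      have hinj : Function.Injective (fun ξ : B → ℝ => ρ (cs.simple i) ξ) := by
        intro a b hab
        simpa using (ρ (cs.simple i)).injective hab
      have hnotmem : (Pi.single i 1 : B → ℝ) ∉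
          (fun ξ => ρ (cs.simple i) ξ) '' coxNSet ρ (cs.simple i * g) := by
        rintro ⟨β', hβ', him⟩
        simp only at him
        have hβeq : β' = ρ (cs.simple i) (Pi.single i 1) := by
          rw [← him, ← rho_mul_apply, cs.simple_mul_simple_self, rho_one_apply]
        rw [rho_simple_self cs ρ hρ] at hβeq
        obtain ⟨_, hpos', _⟩ := hβ'
        have h5 := hpos' i
        rw [hβeq] at h5
        simp only [Pi.neg_apply, Pi.single_eq_same] at h5
        linarith
      constructor
      · rw [hkey]
        exact ((hfin'.image _).insert _)
      · rw [hkey, Set.ncard_insert_of_notMem hnotmem (hfin'.image _),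
          Set.ncard_image_of_injective _ hinj, hcard']

end CoxCount
section CoxFinal

open CoxeterSystem
open scoped Real

variable {B : Type*} [Fintype B] [DecidableEq B] {W : Type*} [Group W]
  {M : CoxeterMatrix B} (cs : CoxeterSystem M W)
  (ρ : W →* ((B → ℝ) ≃ₗ[ℝ] (B → ℝ)))
  (hρ : ∀ (s : B) (ξ : B → ℝ),
      ρ (cs.simple s) ξ = ξ - (2 * coxForm M (Pi.single s 1) ξ) • (Pi.single s (1:ℝ) : B → ℝ))

lemma pi_decomp (ξ : B → ℝ) : ∑ b : B, ξ b • (Pi.single b 1 : B → ℝ) = ξ := by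
  have h1 : ∀ b : B, ξ b • (Pi.single b 1 : B → ℝ) = Pi.single b (ξ b) := by
    intro b
    funext b'
    rcases eq_or_ne b' b with rfl | hb'
    · simp
    · simp [Pi.single_eq_of_ne hb']
  rw [Finset.sum_congr rfl (fun b _ => h1 b)]
  exact Finset.univ_sum_single ξ

lemma eval_pos_of_coxPos (c : (B → ℝ) →ₗ[ℝ] ℝ) (hc : ∀ s : B, 0 < c (Pi.single s 1))
    {ξ : B → ℝ} (hpos : coxPos ξ) (hne : ξ ≠ 0) : 0 < c ξ := by
  conv_rhs => rw [← pi_decomp ξ]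
  rw [map_sum]
  have hterm : ∀ b : B, c (ξ b • (Pi.single b 1 : B → ℝ)) = ξ b * c (Pi.single b 1) := by
    intro b
    rw [map_smul, smul_eq_mul]
  obtain ⟨b₀, hb₀⟩ : ∃ b, ξ b ≠ 0 := by
    by_contra hcon
    push_neg at hcon
    exact hne (funext hcon)
  apply Finset.sum_pos'
  · intro b _
    rw [hterm b]
    exact mul_nonneg (hpos b) (hc b).le
  · refine ⟨b₀, Finset.mem_univ _, ?_⟩
    rw [hterm b₀]
    exact mul_pos (lt_of_le_of_ne (hpos b₀) (Ne.symm hb₀)) (hc b₀)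

lemma eval_neg_of_coxNeg (c : (B → ℝ) →ₗ[ℝ] ℝ) (hc : ∀ s : B, 0 < c (Pi.single s 1))
    {ξ : B → ℝ} (hneg : coxNeg ξ) (hne : ξ ≠ 0) : c ξ < 0 := by
  have hpos : coxPos (-ξ) := fun b => by simpa using hneg b
  have hne' : -ξ ≠ 0 := fun h => hne (by simpa using congrArg Neg.neg h)
  have := eval_pos_of_coxPos c hc hpos hne'
  rw [map_neg] at this
  linarith

/-- two functionals with the same kernel-hyperplane give proportional vectors -/
lemma hyper_prop {β β' : B → ℝ} (hβ : β ≠ 0)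
    (h : {f : (B → ℝ) →ₗ[ℝ] ℝ | f β = 0} = {f : (B → ℝ) →ₗ[ℝ] ℝ | f β' = 0}) :
    ∃ r : ℝ, β' = r • β := by
  obtain ⟨b, hb⟩ : ∃ b, β b ≠ 0 := by
    by_contra hcon
    push_neg at hcon
    exact hβ (funext hcon)
  refine ⟨β' b / β b, ?_⟩
  have key : ∀ f : (B → ℝ) →ₗ[ℝ] ℝ, f (β' - (β' b / β b) • β) = 0 := by
    intro f
    have hg : (f - (f β / β b) • (LinearMap.proj b : (B → ℝ) →ₗ[ℝ] ℝ)) β = 0 := by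
      simp only [LinearMap.sub_apply, LinearMap.smul_apply, LinearMap.proj_apply, smul_eq_mul]
      field_simp
      ring
    have hg' : (f - (f β / β b) • (LinearMap.proj b : (B → ℝ) →ₗ[ℝ] ℝ)) ∈
        {f : (B → ℝ) →ₗ[ℝ] ℝ | f β = 0} := hg
    rw [h] at hg'
    have hg'' : f β' - (f β / β b) * β' b = 0 := by
      simpa [LinearMap.sub_apply, LinearMap.smul_apply, LinearMap.proj_apply,
        smul_eq_mul] using hg'
    rw [map_sub, map_smul, smul_eq_mul]
    field_simp at hg'' ⊢
    linarith
  have hx := (Module.forall_dual_apply_eq_zero_iff ℝ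
    (β' - (β' b / β b) • β)).mp key
  rw [sub_eq_zero] at hx
  exact hx

include hρ

/-- distinct positive roots give distinct hyperplanes -/
lemma root_hyper_inj {β β' : B → ℝ} (w w' : W) (l l' : B)
    (hβ : β = ρ w (Pi.single l 1)) (hβ' : β' = ρ w' (Pi.single l' 1))
    (hpos : coxPos β) (hpos' : coxPos β')
    (h : {f : (B → ℝ) →ₗ[ℝ] ℝ | f β = 0} = {f : (B → ℝ) →ₗ[ℝ] ℝ | f β' = 0}) :
    β = β' := by
  have hβne : β ≠ 0 := hβ ▸ rho_root_ne_zero ρ w l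
  have hβne' : β' ≠ 0 := hβ' ▸ rho_root_ne_zero ρ w' l'
  obtain ⟨r, hr⟩ := hyper_prop hβne h
  have hn : coxForm M β β = 1 := by rw [hβ]; exact root_norm_one cs ρ hρ w l
  have hn' : coxForm M β' β' = 1 := by rw [hβ']; exact root_norm_one cs ρ hρ w' l'
  rw [hr, coxForm_smul_left, coxForm_smul_right, hn] at hn'
  have h4 : (r - 1) * (r + 1) = 0 := by nlinarith
  rcases mul_eq_zero.mp h4 with h5 | h5
  · rw [hr, show r = 1 by linarith, one_smul]
  · exfalso
    have hr1 : r = -1 := by linarith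
    rw [hr1] at hr
    have : β = 0 := by
      funext b
      have h6 := hpos b
      have h7 := hpos' b
      rw [hr] at h7
      simp only [Pi.smul_apply, smul_eq_mul, neg_one_mul] at h7
      simp only [Pi.zero_apply]
      linarith
    exact hβne this

lemma neg_root (w : W) (l : B) :
    ρ (w * cs.simple l) (Pi.single l 1) = -(ρ w (Pi.single l 1)) := by
  rw [rho_mul_apply, rho_simple_self cs ρ hρ, map_neg]

end CoxFinal

theorem stmt_2
    {B : Type*} [Fintype B] [DecidableEq B] {W : Type*} [Group W]
    {M : CoxeterMatrix B} (cs : CoxeterSystem M W)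
    -- the geometric representation `σ : W →* GL(V)`, `V = B → ℝ`,
    -- with `σ_s ξ = ξ - 2 B(αs, ξ) αs` on the simple reflections
    (ρ : W →* ((B → ℝ) ≃ₗ[ℝ] (B → ℝ)))
    (hρ : ∀ (s : B) (ξ : B → ℝ),
      ρ (cs.simple s) ξ = ξ - (2 * coxForm M (Pi.single s 1) ξ) • (Pi.single s (1:ℝ) : B → ℝ))
    -- the dual (adjoint) action on `V* = V →ₗ[ℝ] ℝ`: `(g • f)(ξ) = f (σ(g⁻¹) ξ)`
    (dualAct : W → ((B → ℝ) →ₗ[ℝ] ℝ) → ((B → ℝ) →ₗ[ℝ] ℝ))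
    (hdual : ∀ (g : W) (f : (B → ℝ) →ₗ[ℝ] ℝ) (ξ : B → ℝ),
      dualAct g f ξ = f ((ρ g⁻¹) ξ))
    -- the hyperplanes `Z_s = {f ∈ V* : f(αs) = 0}` and the family `H = ⋃_{g,s} g Z_s`
    (Zs : B → Set ((B → ℝ) →ₗ[ℝ] ℝ))
    (hZs : ∀ s, Zs s = {f | f (Pi.single s 1) = 0})
    (H : Set (Set ((B → ℝ) →ₗ[ℝ] ℝ)))
    (hH : H = {Z | ∃ (g : W) (s : B), Z = dualAct g '' Zs s})
    -- a point `c` of the open fundamental chamber `C = ⋂_s {f : f(αs) > 0}`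
    (c : (B → ℝ) →ₗ[ℝ] ℝ) (hc : ∀ s : B, 0 < c (Pi.single s 1))
    (g : W) :
    {Z ∈ H | (Z ∩ segment ℝ (dualAct g c) c).Nonempty}.ncard = cs.length g := by
  classical
  -- dictionary between hyperplanes in `H` and roots
  have hdict : ∀ (w : W) (l : B),
      dualAct w '' Zs l = {f : (B → ℝ) →ₗ[ℝ] ℝ | f (ρ w (Pi.single l 1)) = 0} := by
    intro w l
    ext f
    constructor
    · rintro ⟨f₀, hf₀, rfl⟩
      show dualAct w f₀ (ρ w (Pi.single l 1)) = 0
      rw [hdual, rho_inv_cancel]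
      rw [hZs] at hf₀
      exact hf₀
    · intro hf
      refine ⟨f.comp (ρ w : (B → ℝ) →ₗ[ℝ] (B → ℝ)), ?_, ?_⟩
      · rw [hZs]
        simp only [Set.mem_setOf_eq, LinearMap.coe_comp, Function.comp_apply,
          LinearEquiv.coe_coe]
        exact hf
      · apply LinearMap.ext
        intro ξ
        rw [hdual]
        simp only [LinearMap.coe_comp, Function.comp_apply, LinearEquiv.coe_coe]
        rw [rho_cancel_inv]
  -- the set of crossing hyperplanes is the image of the inversion set
  have hsep : {Z ∈ H | (Z ∩ segment ℝ (dualAct g c) c).Nonempty} =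
      (fun β : B → ℝ => {f : (B → ℝ) →ₗ[ℝ] ℝ | f β = 0}) '' coxNSet ρ g := by
    ext Z
    constructor
    · rintro ⟨hZH, f, hfZ, hfseg⟩
      rw [hH] at hZH
      obtain ⟨w, l, hZ⟩ := hZH
      rw [hdict w l] at hZ
      -- pass to a positive root γ with the same hyperplane
      obtain ⟨γ, hγrep, hγpos, hZγ⟩ : ∃ γ : B → ℝ, (∃ w'' l'', γ = ρ w'' (Pi.single l'' 1)) ∧
          coxPos γ ∧ Z = {f : (B → ℝ) →ₗ[ℝ] ℝ | f γ = 0} := by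
        rcases coxPos_or_coxNeg cs ρ hρ w l with hp | hn
        · exact ⟨ρ w (Pi.single l 1), ⟨w, l, rfl⟩, hp, hZ⟩
        · refine ⟨ρ (w * cs.simple l) (Pi.single l 1), ⟨w * cs.simple l, l, rfl⟩, ?_, ?_⟩
          · rw [neg_root cs ρ hρ]
            intro b
            simp only [Pi.neg_apply]
            linarith [hn b]
          · rw [hZ]
            ext f'
            simp only [Set.mem_setOf_eq, neg_root cs ρ hρ, map_neg, neg_eq_zero]
      obtain ⟨w'', l'', hγ⟩ := hγrep
      have hγne : γ ≠ 0 := hγ ▸ rho_root_ne_zero ρ w'' l''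
      have hcγ : 0 < c γ := eval_pos_of_coxPos c hc hγpos hγne
      -- the value of f on γ
      rw [hZγ] at hfZ
      obtain ⟨a, b', ha, hb', hab, hf⟩ := hfseg
      have heval : a * (c (ρ g⁻¹ γ)) + b' * (c γ) = 0 := by
        have h1 : (a • (dualAct g c) + b' • c) γ = f γ := by rw [hf]
        rw [LinearMap.add_apply, LinearMap.smul_apply, LinearMap.smul_apply,
          smul_eq_mul, smul_eq_mul, hdual] at h1
        rw [h1]
        exact hfZ
      -- ρ g⁻¹ γ must be negative
      have hrep2 : ρ g⁻¹ γ = ρ (g⁻¹ * w'') (Pi.single l'' 1) := by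
        rw [rho_mul_apply, hγ]
      have hneg2 : coxNeg (ρ g⁻¹ γ) := by
        rcases coxPos_or_coxNeg cs ρ hρ (g⁻¹ * w'') l'' with hp2 | hn2
        · exfalso
          rw [← hrep2] at hp2
          have hne2 : ρ g⁻¹ γ ≠ 0 := hrep2 ▸ rho_root_ne_zero ρ (g⁻¹ * w'') l''
          have hpos2 : 0 < c (ρ g⁻¹ γ) := eval_pos_of_coxPos c hc hp2 hne2
          nlinarith [mul_nonneg ha hpos2.le, mul_nonneg hb' hcγ.le,
            mul_pos_iff.mpr (Or.inl ⟨lt_of_le_of_ne ha (by rintro rfl; simp at hab; nlinarith), hpos2⟩)]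
        · rw [← hrep2] at hn2
          exact hn2
      exact ⟨γ, ⟨⟨w'', l'', hγ⟩, hγpos, hneg2⟩, hZγ.symm⟩
    · rintro ⟨β, ⟨⟨w, l, hβrep⟩, hβpos, hβneg⟩, rfl⟩
      constructor
      · rw [hH]
        exact ⟨w, l, by rw [hdict w l, hβrep]⟩
      · -- construct the crossing point
        have hβne : β ≠ 0 := hβrep ▸ rho_root_ne_zero ρ w l
        have hBv : 0 < c β := eval_pos_of_coxPos c hc hβpos hβne
        have hginvne : ρ g⁻¹ β ≠ 0 := by
          rw [hβrep, ← rho_mul_apply]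
          exact rho_root_ne_zero ρ (g⁻¹ * w) l
        have hA : c (ρ g⁻¹ β) < 0 := eval_neg_of_coxNeg c hc hβneg hginvne
        set Av : ℝ := c (ρ g⁻¹ β) with hAv
        set Bv : ℝ := c β with hBvdef
        have hdenom : 0 < Bv - Av := by linarith
        refine ⟨(Bv / (Bv - Av)) • (dualAct g c) + (-Av / (Bv - Av)) • c, ?_, ?_⟩
        · show ((Bv / (Bv - Av)) • (dualAct g c) + (-Av / (Bv - Av)) • c) β = 0
          rw [LinearMap.add_apply, LinearMap.smul_apply, LinearMap.smul_apply,
            smul_eq_mul, smul_eq_mul, hdual]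
          rw [← hAv, ← hBvdef]
          field_simp
          ring
        · refine ⟨Bv / (Bv - Av), -Av / (Bv - Av), ?_, ?_, ?_, rfl⟩
          · positivity
          · apply div_nonneg _ hdenom.le
            linarith
          · field_simp
            ring
  rw [hsep]
  have hinj : Set.InjOn (fun β : B → ℝ => {f : (B → ℝ) →ₗ[ℝ] ℝ | f β = 0})
      (coxNSet ρ g) := by
    rintro β ⟨⟨w, l, hβ⟩, hβpos, _⟩ β' ⟨⟨w', l', hβ'⟩, hβ'pos, _⟩ heq
    exact root_hyper_inj cs ρ hρ w w' l l' hβ hβ' hβpos hβ'pos heq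
  rw [Set.ncard_image_of_injOn hinj]
  exact (coxNSet_card cs ρ hρ (cs.length g) g rfl).2
end

section
/- Let (G,S) be a Coxeter system with word length function ℓ. Then ℓ is a conditionally negative definite function on G; that is, for any finitely many g₁,...,gₙ ∈ G and complex numbers c₁,...,cₙ with Σᵢ cᵢ = 0, one has Σ_{i,j} cᵢ · conj(cⱼ) · ℓ(gᵢ⁻¹gⱼ) ≤ 0. -/
open List

namespace CNDAux

attribute [local instance] Classical.propDecidable

variable {B : Type*} {W : Type*} [Group W] {M : CoxeterMatrix B} (cs : CoxeterSystem M W)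

local prefix:100 "s" => cs.simple
local prefix:100 "π" => cs.wordProd
local prefix:100 "ℓ" => cs.length
local prefix:100 "lis" => cs.leftInvSeq

/-- The sign-flipping permutation associated to a simple generator. -/
noncomputable def sigma (i : B) : Equiv.Perm (W × ℤˣ) where
  toFun x := (s i * x.1 * s i, if x.1 = s i then -x.2 else x.2)
  invFun x := (s i * x.1 * s i, if x.1 = s i then -x.2 else x.2)
  left_inv x := by
    obtain ⟨t, ε⟩ := x
    simp only
    have h1 : s i * (s i * t * s i) * s i = t := by
      group
      simp [cs.simple_sq]
    have h2 : (s i * t * s i = s i) ↔ (t = s i) := by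
      constructor
      · intro h
        have := congrArg (fun x => s i * x * s i) h
        simpa [mul_assoc, cs.simple_mul_simple_cancel_left, cs.simple_mul_simple_self] using this
      · rintro rfl
        simp [cs.simple_mul_simple_cancel_right, cs.simple_mul_simple_self]
    rw [h1]
    by_cases h : t = s i <;> simp [h, h2]
  right_inv x := by
    obtain ⟨t, ε⟩ := x
    simp only
    have h1 : s i * (s i * t * s i) * s i = t := by
      group
      simp [cs.simple_sq]
    have h2 : (s i * t * s i = s i) ↔ (t = s i) := by
      constructor
      · intro h
        have := congrArg (fun x => s i * x * s i) h
        simpa [mul_assoc, cs.simple_mul_simple_cancel_left, cs.simple_mul_simple_self] using this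
      · rintro rfl
        simp [cs.simple_mul_simple_cancel_right, cs.simple_mul_simple_self]
    rw [h1]
    by_cases h : t = s i <;> simp [h, h2]

theorem sigma_apply (i : B) (t : W) (ε : ℤˣ) :
    sigma cs i (t, ε) = (s i * t * s i, if t = s i then -ε else ε) := rfl



section Abstract

variable {G : Type*} [Group G] {a x : G} (hx : ∀ r : ℕ, x * a ^ r = (a ^ r)⁻¹ * x)
include hx

theorem absE1 (k : ℕ) : (a ^ k)⁻¹ * x * a ^ k = x * a ^ (2 * k) := by
  calc (a ^ k)⁻¹ * x * a ^ k = (a ^ k)⁻¹ * ((a ^ k)⁻¹ * x) := by rw [mul_assoc, hx k]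
    _ = (a ^ k * a ^ k)⁻¹ * x := by group
    _ = (a ^ (2 * k))⁻¹ * x := by rw [← pow_add, two_mul]
    _ = x * a ^ (2 * k) := (hx (2 * k)).symm

theorem absE2 (k : ℕ) : (a ^ k)⁻¹ * (x * a) * a ^ k = x * a ^ (2 * k + 1) := by
  have hxa : x * a = a⁻¹ * x := by simpa using hx 1
  calc (a ^ k)⁻¹ * (x * a) * a ^ k = (a ^ k)⁻¹ * (a⁻¹ * x) * a ^ k := by rw [hxa]
    _ = (a * a ^ k)⁻¹ * (x * a ^ k) := by group
    _ = (a * a ^ k)⁻¹ * ((a ^ k)⁻¹ * x) := by rw [hx k]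
    _ = (a ^ k * (a * a ^ k))⁻¹ * x := by group
    _ = (a ^ (2 * k + 1))⁻¹ * x := by
          rw [← pow_succ', ← pow_add, show k + (k + 1) = 2 * k + 1 from by omega]
    _ = x * a ^ (2 * k + 1) := (hx (2 * k + 1)).symm

theorem absC1 (k : ℕ) (t : G) : (a ^ k * t * (a ^ k)⁻¹ = x) ↔ t = x * a ^ (2 * k) := by
  rw [← absE1 hx k]
  constructor
  · intro h
    rw [show t = (a ^ k)⁻¹ * (a ^ k * t * (a ^ k)⁻¹) * a ^ k by group, h]
  · intro h
    rw [h]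
    group

theorem absC2 (hx2 : x * x = 1) (k : ℕ) (t : G) :
    (x * (a ^ k * t * (a ^ k)⁻¹) * x = a * x⁻¹) ↔ t = x * a ^ (2 * k + 1) := by
  have hxinv : x⁻¹ = x := inv_eq_of_mul_eq_one_right hx2
  rw [← absE2 hx k]
  constructor
  · intro h
    have hX : a ^ k * t * (a ^ k)⁻¹ = x * a := by
      have h1 : a ^ k * t * (a ^ k)⁻¹ = x⁻¹ * (a * x⁻¹) * x⁻¹ := by rw [← h]; group
      rw [hxinv] at h1
      rw [h1, show x * (a * x) * x = x * (a * (x * x)) by group, hx2, mul_one]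
    rw [show t = (a ^ k)⁻¹ * (a ^ k * t * (a ^ k)⁻¹) * a ^ k by group, hX]
  · intro h
    rw [h, hxinv]
    rw [show x * (a ^ k * ((a ^ k)⁻¹ * (x * a) * a ^ k) * (a ^ k)⁻¹) * x
        = (x * x) * (a * x) by group, hx2, one_mul]

end Abstract

theorem sj_mul_pow (i j : B) (r : ℕ) :
    s j * (s i * s j) ^ r = ((s i * s j) ^ r)⁻¹ * s j := by
  have h0 : s j * (s i * s j) * (s j)⁻¹ = (s i * s j)⁻¹ := by
    rw [cs.inv_simple, mul_inv_rev, cs.inv_simple, cs.inv_simple, ← mul_assoc,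
      cs.simple_mul_simple_cancel_right]
  have h : s j * (s i * s j) ^ r * (s j)⁻¹ = ((s i * s j) ^ r)⁻¹ := by
    rw [← conj_pow, h0, inv_pow]
  calc s j * (s i * s j) ^ r = (s j * (s i * s j) ^ r * (s j)⁻¹) * s j := by group
    _ = ((s i * s j) ^ r)⁻¹ * s j := by rw [h]

theorem sigma_mul_pow (i j : B) (k : ℕ) (t : W) (ε : ℤˣ) :
    ((sigma cs i * sigma cs j) ^ k) (t, ε) =
      ((s i * s j) ^ k * t * ((s i * s j) ^ k)⁻¹,
        ε * ∏ r ∈ Finset.range (2 * k),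
          (if t = s j * (s i * s j) ^ r then (-1 : ℤˣ) else 1)) := by
  induction k with
  | zero => simp
  | succ k ih =>
    have A : ∀ r : ℕ, s j * (s i * s j) ^ r = ((s i * s j) ^ r)⁻¹ * s j :=
      fun r => sj_mul_pow cs i j r
    have c1 : ((s i * s j) ^ k * t * ((s i * s j) ^ k)⁻¹ = s j)
        ↔ t = s j * (s i * s j) ^ (2 * k) := absC1 A k t
    have c2' : (s j * ((s i * s j) ^ k * t * ((s i * s j) ^ k)⁻¹) * s j
          = (s i * s j) * (s j)⁻¹)
        ↔ t = s j * (s i * s j) ^ (2 * k + 1) := absC2 A (cs.simple_mul_simple_self j) k t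
    rw [cs.inv_simple, cs.simple_mul_simple_cancel_right] at c2'
    have hconj : ∀ y : W, s i * (s j * y * s j) * s i = (s i * s j) * y * (s i * s j)⁻¹ := by
      intro y
      rw [mul_inv_rev, cs.inv_simple, cs.inv_simple]
      group
    rw [pow_succ', Equiv.Perm.mul_apply, ih, Equiv.Perm.mul_apply, sigma_apply, sigma_apply]
    rw [show 2 * (k + 1) = 2 * k + 1 + 1 by ring, Finset.prod_range_succ, Finset.prod_range_succ]
    rw [Prod.mk.injEq]
    constructor
    · rw [hconj, pow_succ',
        show ((s i * s j) * (s i * s j) ^ k)⁻¹ = ((s i * s j) ^ k)⁻¹ * (s i * s j)⁻¹ from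
          mul_inv_rev _ _]
      group
    · simp only [c1, c2']
      split_ifs with h1 h2 h2 <;> simp [mul_neg, neg_mul, mul_assoc]



theorem sigma_liftable : M.IsLiftable (fun i => sigma cs i) := by
  intro i j
  apply Equiv.ext
  rintro ⟨t, ε⟩
  simp only [Equiv.Perm.one_apply]
  rw [sigma_mul_pow]
  rw [cs.simple_mul_simple_pow i j]
  rw [Prod.mk.injEq]
  constructor
  · group
  · rw [show 2 * M.M i j = M.M i j + M.M i j by ring, Finset.prod_range_add]
    have : ∀ r : ℕ, (if t = s j * (s i * s j) ^ (M.M i j + r) then (-1 : ℤˣ) else 1)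
        = (if t = s j * (s i * s j) ^ r then (-1 : ℤˣ) else 1) := by
      intro r
      rw [pow_add, cs.simple_mul_simple_pow i j, one_mul]
    rw [Finset.prod_congr rfl (fun r _ => this r), Int.units_mul_self, mul_one]

/-- The sign representation of the Coxeter group. -/
noncomputable def mu : W →* Equiv.Perm (W × ℤˣ) :=
  cs.lift ⟨fun i => sigma cs i, sigma_liftable cs⟩

theorem mu_simple (i : B) : mu cs (s i) = sigma cs i :=
  cs.lift_apply_simple (sigma_liftable cs) i

/-- The sign of a pair of elements. -/
noncomputable def eta (w t : W) : ℤˣ := ((mu cs w) (t, 1)).2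

theorem conj_simple_eq_simple_iff (j : B) (x : W) : s j * x * s j = s j ↔ x = s j := by
  constructor
  · intro h
    have := congrArg (fun y => s j * y * s j) h
    simpa [mul_assoc, cs.simple_mul_simple_cancel_left, cs.simple_mul_simple_self] using this
  · rintro rfl
    simp [cs.simple_mul_simple_cancel_right, cs.simple_mul_simple_self]

theorem mu_apply (w t : W) (ε : ℤˣ) : mu cs w (t, ε) = (w * t * w⁻¹, ε * eta cs w t) := by
  induction w using cs.simple_induction_left generalizing t ε with
  | one => simp [eta, map_one]
  | mul_simple_left w i hw =>
    have key : ∀ (t : W) (ε : ℤˣ), mu cs (s i * w) (t, ε)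
        = (s i * (w * t * w⁻¹) * s i, if w * t * w⁻¹ = s i then -(ε * eta cs w t)
            else ε * eta cs w t) := by
      intro t ε
      rw [map_mul, Equiv.Perm.mul_apply, hw, mu_simple, sigma_apply]
    rw [key t ε]
    have heta : eta cs (s i * w) t = if w * t * w⁻¹ = s i then -(eta cs w t)
        else eta cs w t := by
      rw [eta, key t 1, one_mul]
    rw [Prod.mk.injEq]
    constructor
    · rw [mul_inv_rev, cs.inv_simple]
      group
    · rw [heta]
      split_ifs <;> simp [mul_neg]

theorem eta_mul (u v t : W) : eta cs (u * v) t = eta cs v t * eta cs u (v * t * v⁻¹) := by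
  have h : mu cs (u * v) (t, 1) = mu cs u (mu cs v (t, 1)) := by
    rw [map_mul, Equiv.Perm.mul_apply]
  rw [eta, h, mu_apply, mu_apply, one_mul]

theorem mu_reflection_word (ω : List B) (i : B) (ε : ℤˣ) :
    mu cs (π ω * s i * (π ω)⁻¹) (π ω * s i * (π ω)⁻¹, ε)
      = (π ω * s i * (π ω)⁻¹, -ε) := by
  induction ω generalizing ε with
  | nil =>
    simp only [CoxeterSystem.wordProd_nil, one_mul, inv_one, mul_one]
    rw [mu_simple, sigma_apply]
    simp [cs.simple_mul_simple_cancel_left]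
  | cons j ω ih =>
    have ht : π (j :: ω) * s i * (π (j :: ω))⁻¹
        = s j * (π ω * s i * (π ω)⁻¹) * s j := by
      rw [cs.wordProd_cons, mul_inv_rev, cs.inv_simple]
      group
    rw [ht]
    set t' := π ω * s i * (π ω)⁻¹ with ht'
    have hmul : mu cs (s j * t' * s j) (s j * t' * s j, ε)
        = mu cs (s j) (mu cs t' (mu cs (s j) (s j * t' * s j, ε))) := by
      rw [← Equiv.Perm.mul_apply, ← Equiv.Perm.mul_apply, ← map_mul, ← map_mul]
    have h1 : s j * (s j * t' * s j) * s j = t' := by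
      rw [show s j * (s j * t' * s j) * s j = s j * s j * t' * (s j * s j) by group,
        cs.simple_mul_simple_self]
      simp
    have hinner : sigma cs j (s j * t' * s j, ε) = (t', if t' = s j then -ε else ε) := by
      rw [sigma_apply, h1]
      simp only [conj_simple_eq_simple_iff cs j t']
    rw [hmul, mu_simple, hinner]
    by_cases hc : t' = s j
    · rw [if_pos hc, ih (-ε), neg_neg, sigma_apply, if_pos hc]
    · rw [if_neg hc, ih ε, sigma_apply, if_neg hc]



theorem leftInvSeq_cons' (i : B) (ω : List B) :
    lis (i :: ω) = s i :: List.map (⇑(MulAut.conj (s i))) (lis ω) := rfl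

theorem eta_count (ω : List B) (t : W) :
    eta cs (π ω)⁻¹ t = (-1) ^ (List.count t (lis ω)) := by
  induction ω generalizing t with
  | nil => simp [eta, map_one, CoxeterSystem.wordProd_nil]
  | cons i ω ih =>
    have hpi : (π (i :: ω))⁻¹ = (π ω)⁻¹ * s i := by
      rw [cs.wordProd_cons, mul_inv_rev, cs.inv_simple]
    have hsig : mu cs ((π ω)⁻¹ * s i) (t, 1)
        = mu cs (π ω)⁻¹ (s i * t * s i, if t = s i then (-1 : ℤˣ) else 1) := by
      rw [map_mul, Equiv.Perm.mul_apply, mu_simple, sigma_apply]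
    have heta : eta cs ((π ω)⁻¹ * s i) t
        = (if t = s i then (-1 : ℤˣ) else 1) * eta cs (π ω)⁻¹ (s i * t * s i) := by
      rw [eta, hsig, mu_apply]
    rw [hpi, heta, ih (s i * t * s i)]
    have hmap : List.count t (List.map (⇑(MulAut.conj (s i))) (lis ω))
        = List.count (s i * t * s i) (lis ω) := by
      have hinj : Function.Injective (⇑(MulAut.conj (s i))) := (MulAut.conj (s i)).injective
      have hform : (MulAut.conj (s i)) (s i * t * s i) = t := by
        rw [MulAut.conj_apply, cs.inv_simple,
          show s i * (s i * t * s i) * s i = s i * s i * t * (s i * s i) by group,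
          cs.simple_mul_simple_self]
        simp
      have h := List.count_map_of_injective (lis ω) _ hinj (s i * t * s i)
      rw [hform] at h
      exact h
    rw [leftInvSeq_cons', List.count_cons, hmap]
    by_cases hc : t = s i
    · rw [if_pos hc, hc, show s i * s i * s i = s i by
        rw [cs.simple_mul_simple_self, one_mul], if_pos (by simp), pow_succ]
      simp [mul_comm]
    · rw [if_neg hc, one_mul, if_neg (by simp only [beq_iff_eq]; exact fun h => hc h.symm), add_zero]

theorem eta_reflection_self {t : W} (ht : cs.IsReflection t) : eta cs t t = -1 := by
  obtain ⟨w, i, rfl⟩ := ht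
  obtain ⟨ω, rfl⟩ := cs.wordProd_surjective w
  rw [eta, mu_reflection_word]

theorem length_lt_of_eta_neg {t : W} (w : W) (h : eta cs w⁻¹ t = -1) :
    ℓ (t * w) < ℓ w := by
  obtain ⟨ω, hred, rfl⟩ := cs.exists_reduced_word' w
  rw [eta_count] at h
  have hmem : t ∈ lis ω := by
    by_contra hm
    rw [List.count_eq_zero_of_not_mem hm, pow_zero] at h
    exact absurd h (by decide)
  obtain ⟨j, hj, hget⟩ := List.mem_iff_getElem.mp hmem
  have hj' : j < ω.length := by simpa using hj
  have hgd : (lis ω).getD j 1 = t := by rw [List.getD_eq_getElem _ _ hj, hget]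
  have hkey := cs.getD_leftInvSeq_mul_wordProd ω j
  rw [hgd] at hkey
  have hlen := List.length_eraseIdx_add_one hj'
  calc ℓ (t * π ω) = ℓ (π (ω.eraseIdx j)) := by rw [hkey]
    _ ≤ (ω.eraseIdx j).length := cs.length_wordProd_le _
    _ < ω.length := by omega
    _ = ℓ (π ω) := hred.symm

theorem eta_neg_iff {t : W} (ht : cs.IsReflection t) (w : W) :
    eta cs w⁻¹ t = -1 ↔ ℓ (t * w) < ℓ w := by
  constructor
  · exact length_lt_of_eta_neg cs w
  · intro hlen
    rcases Int.units_eq_one_or (eta cs w⁻¹ t) with h1 | h1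
    · exfalso
      have htt : t * t = 1 := ht.mul_self
      have hw : w⁻¹ = (t * w)⁻¹ * t := by
        rw [mul_inv_rev, mul_assoc, inv_mul_cancel, mul_one]
      have hcoc := eta_mul cs (t * w)⁻¹ t t
      have harg : t * t * t⁻¹ = t := by rw [htt, one_mul, ht.inv]
      rw [← hw, eta_reflection_self cs ht, harg, h1] at hcoc
      have h2 : eta cs (t * w)⁻¹ t = -1 := by
        rcases Int.units_eq_one_or (eta cs (t * w)⁻¹ t) with h | h
        · rw [h, mul_one] at hcoc
          exact absurd hcoc (by decide)
        · exact h
      have hlt := length_lt_of_eta_neg cs (t * w) h2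
      rw [← mul_assoc, htt, one_mul] at hlt
      exact lt_asymm hlen hlt
    · exact h1



/-- The set of left inversions of `w`. -/
noncomputable def invSet (w : W) : Finset W :=
  (lis (cs.exists_reduced_word' w).choose).toFinset

theorem card_invSet (w : W) : (invSet cs w).card = ℓ w := by
  obtain ⟨hred, hw⟩ := (cs.exists_reduced_word' w).choose_spec
  rw [invSet, List.toFinset_card_of_nodup hred.nodup_leftInvSeq, cs.length_leftInvSeq]
  conv_rhs => rw [hw]
  exact hred.symm

theorem mem_invSet {w t : W} : t ∈ invSet cs w ↔ cs.IsLeftInversion w t := by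
  obtain ⟨hred, hw⟩ := (cs.exists_reduced_word' w).choose_spec
  constructor
  · intro hmem
    rw [invSet, List.mem_toFinset] at hmem
    have := cs.isLeftInversion_of_mem_leftInvSeq hred hmem
    rwa [← hw] at this
  · rintro ⟨hrefl, hlen⟩
    rw [invSet, List.mem_toFinset]
    have hη : eta cs w⁻¹ t = -1 := (eta_neg_iff cs hrefl w).mpr hlen
    rw [hw, eta_count] at hη
    by_contra hm
    rw [List.count_eq_zero_of_not_mem hm, pow_zero] at hη
    exact absurd hη (by decide)

theorem isLeftInversion_iff_eta (w t : W) :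
    cs.IsLeftInversion w t ↔ cs.IsReflection t ∧ eta cs w⁻¹ t = -1 := by
  constructor
  · rintro ⟨hr, hl⟩
    exact ⟨hr, (eta_neg_iff cs hr w).mpr hl⟩
  · rintro ⟨hr, he⟩
    exact ⟨hr, (eta_neg_iff cs hr w).mp he⟩

theorem eta_sep (u v t : W) :
    eta cs v⁻¹ t = eta cs u⁻¹ t * eta cs (u⁻¹ * v)⁻¹ (u⁻¹ * t * u) := by
  have hv : v⁻¹ = (u⁻¹ * v)⁻¹ * u⁻¹ := by group
  rw [hv, eta_mul]
  congr 2
  rw [inv_inv]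

theorem invSet_symmDiff (u v : W) :
    symmDiff (invSet cs u) (invSet cs v)
      = (invSet cs (u⁻¹ * v)).image (fun x => u * x * u⁻¹) := by
  ext t
  rw [Finset.mem_symmDiff, Finset.mem_image]
  have hRHS : (∃ x ∈ invSet cs (u⁻¹ * v), u * x * u⁻¹ = t)
      ↔ cs.IsLeftInversion (u⁻¹ * v) (u⁻¹ * t * u) := by
    constructor
    · rintro ⟨x, hx, rfl⟩
      have h2 : u⁻¹ * (u * x * u⁻¹) * u = x := by group
      rw [h2]
      exact (mem_invSet cs).mp hx
    · intro h
      exact ⟨u⁻¹ * t * u, (mem_invSet cs).mpr h, by group⟩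
  rw [hRHS]
  have conj_iff : cs.IsReflection (u⁻¹ * t * u) ↔ cs.IsReflection t := by
    have h := cs.isReflection_conj_iff u⁻¹ t
    rwa [inv_inv] at h
  simp only [mem_invSet, isLeftInversion_iff_eta, conj_iff, mul_inv_rev, inv_inv]
  by_cases hR : cs.IsReflection t
  · simp only [hR, true_and]
    have hsep := eta_sep cs u v t
    simp only [mul_inv_rev, inv_inv] at hsep
    rcases Int.units_eq_one_or (eta cs u⁻¹ t) with ha | ha <;>
      rcases Int.units_eq_one_or (eta cs (v⁻¹ * u) (u⁻¹ * t * u)) with hx | hx <;>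
        rw [ha, hx] at hsep <;> simp [ha, hx, hsep] <;> decide
  · simp [hR]

theorem length_eq_card_symmDiff (u v : W) :
    (ℓ (u⁻¹ * v) : ℕ) = (symmDiff (invSet cs u) (invSet cs v)).card := by
  have hinj : Function.Injective (fun x : W => u * x * u⁻¹) := by
    intro x y h
    simp only at h
    have h2 : u⁻¹ * (u * x * u⁻¹) * u = u⁻¹ * (u * y * u⁻¹) * u := by rw [h]
    have hcan : ∀ z : W, u⁻¹ * (u * z * u⁻¹) * u = z := fun z => by group
    rwa [hcan x, hcan y] at h2
  rw [invSet_symmDiff, Finset.card_image_of_injective _ hinj, card_invSet]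



theorem length_card_formula (u v : W) :
    (ℓ (u⁻¹ * v) : ℂ) = ((invSet cs u).card : ℂ) + ((invSet cs v).card : ℂ)
      - 2 * (((invSet cs u ∩ invSet cs v).card : ℂ)) := by
  have h := length_eq_card_symmDiff cs u v
  have hν : (symmDiff (invSet cs u) (invSet cs v)).card
        + 2 * ((invSet cs u ∩ invSet cs v)).card
      = (invSet cs u).card + (invSet cs v).card := by
    have h1 := Finset.card_inter_add_card_sdiff (invSet cs u) (invSet cs v)
    have h2 := Finset.card_inter_add_card_sdiff (invSet cs v) (invSet cs u)
    have hsd : (symmDiff (invSet cs u) (invSet cs v)).card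
        = (invSet cs u \ invSet cs v).card + (invSet cs v \ invSet cs u).card := by
      rw [symmDiff_def, Finset.sup_eq_union, Finset.card_union_of_disjoint disjoint_sdiff_sdiff]
    rw [Finset.inter_comm] at h2
    omega
  have hν' : ((symmDiff (invSet cs u) (invSet cs v)).card : ℂ)
        + 2 * (((invSet cs u ∩ invSet cs v)).card : ℂ)
      = ((invSet cs u).card : ℂ) + ((invSet cs v).card : ℂ) := by
    exact_mod_cast congrArg (Nat.cast : ℕ → ℂ) hν
  rw [h]
  linear_combination hν'

end CNDAux

/-- The word length of a Coxeter system is conditionally negative definite. -/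
theorem stmt_3 {B : Type*} [Finite B] {W : Type*} [Group W]
    {M : CoxeterMatrix B} (cs : CoxeterSystem M W)
    (n : ℕ) (g : Fin n → W) (c : Fin n → ℂ) (hc : ∑ i, c i = 0) :
    (∑ i, ∑ j, c i * (starRingEnd ℂ) (c j) * (cs.length ((g i)⁻¹ * g j) : ℂ)).re ≤ 0 ∧
    (∑ i, ∑ j, c i * (starRingEnd ℂ) (c j) * (cs.length ((g i)⁻¹ * g j) : ℂ)).im = 0 := by
  classical
  set A : Fin n → Finset W := fun i => CNDAux.invSet cs (g i) with hA
  set U : Finset W := Finset.univ.biUnion A with hU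
  set ind : Fin n → W → ℂ := fun i t => if t ∈ A i then 1 else 0 with hind
  set z : W → ℂ := fun t => ∑ i, c i * ind i t with hz
  have hinter : ∀ i j : Fin n, (((A i ∩ A j).card : ℂ)) = ∑ t ∈ U, ind i t * ind j t := by
    intro i j
    have hsub : A i ∩ A j ⊆ U := fun t htm =>
      Finset.mem_biUnion.mpr ⟨i, Finset.mem_univ i, (Finset.mem_inter.mp htm).1⟩
    calc ((A i ∩ A j).card : ℂ) = ∑ _t ∈ A i ∩ A j, (1 : ℂ) := by simp
      _ = ∑ _t ∈ U ∩ (A i ∩ A j), (1 : ℂ) := by rw [Finset.inter_eq_right.mpr hsub]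
      _ = ∑ t ∈ U, if t ∈ A i ∩ A j then (1 : ℂ) else 0 := (Finset.sum_ite_mem U _ _).symm
      _ = ∑ t ∈ U, ind i t * ind j t := by
          refine Finset.sum_congr rfl fun t _ => ?_
          by_cases h1 : t ∈ A i <;> by_cases h2 : t ∈ A j <;>
            simp [hind, h1, h2, Finset.mem_inter]
  have hlen : ∀ i j : Fin n, (cs.length ((g i)⁻¹ * g j) : ℂ)
      = ((A i).card : ℂ) + ((A j).card : ℂ) - 2 * ∑ t ∈ U, ind i t * ind j t := by
    intro i j
    rw [← hinter i j]
    exact CNDAux.length_card_formula cs (g i) (g j)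
  have hconjz : ∀ t, (starRingEnd ℂ) (z t) = ∑ j, (starRingEnd ℂ) (c j) * ind j t := by
    intro t
    simp only [hz]
    rw [map_sum]
    refine Finset.sum_congr rfl fun j _ => ?_
    rw [map_mul]
    congr 1
    simp [hind, apply_ite]
  have hzz : ∑ t ∈ U, z t * (starRingEnd ℂ) (z t)
      = ∑ i, ∑ j, ∑ t ∈ U, (c i * ind i t) * ((starRingEnd ℂ) (c j) * ind j t) := by
    have h1 : ∀ t, z t * (starRingEnd ℂ) (z t)
        = ∑ i, ∑ j, (c i * ind i t) * ((starRingEnd ℂ) (c j) * ind j t) := by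
      intro t
      rw [hconjz t]
      simp only [hz]
      rw [Finset.sum_mul_sum]
    rw [Finset.sum_congr rfl fun t _ => h1 t, Finset.sum_comm]
    exact Finset.sum_congr rfl fun i _ => Finset.sum_comm
  have hcz : ∑ j, (starRingEnd ℂ) (c j) = 0 := by rw [← map_sum, hc, map_zero]
  have key : (∑ i, ∑ j, c i * (starRingEnd ℂ) (c j) * (cs.length ((g i)⁻¹ * g j) : ℂ))
      = (-2 : ℂ) * ∑ t ∈ U, z t * (starRingEnd ℂ) (z t) := by
    calc (∑ i, ∑ j, c i * (starRingEnd ℂ) (c j) * (cs.length ((g i)⁻¹ * g j) : ℂ))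
        = ∑ i, ∑ j, ((c i * ((A i).card : ℂ)) * (starRingEnd ℂ) (c j)
          + c i * ((starRingEnd ℂ) (c j) * ((A j).card : ℂ))
          - 2 * ∑ t ∈ U, (c i * ind i t) * ((starRingEnd ℂ) (c j) * ind j t)) := by
            refine Finset.sum_congr rfl fun i _ => Finset.sum_congr rfl fun j _ => ?_
            have hT : ∑ t ∈ U, (c i * ind i t) * ((starRingEnd ℂ) (c j) * ind j t)
                = c i * (starRingEnd ℂ) (c j) * ∑ t ∈ U, ind i t * ind j t := by
              rw [Finset.mul_sum]
              exact Finset.sum_congr rfl fun t _ => by ring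
            rw [hlen i j, hT]
            ring
      _ = (∑ i, c i * ((A i).card : ℂ)) * (∑ j, (starRingEnd ℂ) (c j))
          + (∑ i, c i) * (∑ j, (starRingEnd ℂ) (c j) * ((A j).card : ℂ))
          - 2 * ∑ t ∈ U, z t * (starRingEnd ℂ) (z t) := by
            rw [hzz, Finset.sum_mul_sum, Finset.sum_mul_sum]
            simp only [Finset.sum_add_distrib, Finset.sum_sub_distrib, ← Finset.mul_sum]
      _ = (-2 : ℂ) * ∑ t ∈ U, z t * (starRingEnd ℂ) (z t) := by
            rw [hcz, hc]
            ring
  have hreal : (∑ i, ∑ j, c i * (starRingEnd ℂ) (c j) * (cs.length ((g i)⁻¹ * g j) : ℂ))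
      = (((-2 * ∑ t ∈ U, Complex.normSq (z t) : ℝ)) : ℂ) := by
    rw [key, show ∑ t ∈ U, z t * (starRingEnd ℂ) (z t)
        = ∑ t ∈ U, (Complex.normSq (z t) : ℂ)
        from Finset.sum_congr rfl fun t _ => Complex.mul_conj (z t)]
    push_cast
    ring
  rw [hreal]
  constructor
  · rw [Complex.ofReal_re]
    have hnn : 0 ≤ ∑ t ∈ U, Complex.normSq (z t) :=
      Finset.sum_nonneg fun t _ => Complex.normSq_nonneg _
    linarith
  · rw [Complex.ofReal_im]
end

section
/- Let (G,S) be a Coxeter system with word length function ℓ, and fix c in the open fundamental chamber. For g,h ∈ G, ℓ(g⁻¹h) = Σ_{Z∈H} |χ_h(Z) - χ_g(Z)|², where χ_g is the characteristic function of the set N^g of hyperplanes Z in H meeting the segment [g·c, c]. In particular g ↦ χ_g is a map into ℓ²(H) with ‖χ_g - χ_h‖² = ℓ(g⁻¹h). -/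
open scoped Real

set_option linter.unusedSectionVars false
set_option linter.deprecated false
set_option maxHeartbeats 1000000

namespace CoxAux

variable {B : Type*} [Fintype B] [DecidableEq B] (M : CoxeterMatrix B)

/-- entry of the form -/
noncomputable def K (s t : B) : ℝ :=
  if s = t then 1 else if M s t = 0 then -1 else -Real.cos (π / (M s t : ℝ))

theorem K_symm (s t : B) : K M s t = K M t s := by
  unfold K
  rcases eq_or_ne s t with rfl | hst
  · simp
  · rw [if_neg hst, if_neg (Ne.symm hst), M.symmetric s t]

theorem coxForm_eq (ξ η : B → ℝ) : coxForm M ξ η = ∑ s : B, ∑ t : B, ξ s * η t * K M s t := rfl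

theorem coxForm_symm (ξ η : B → ℝ) : coxForm M ξ η = coxForm M η ξ := by
  rw [coxForm_eq, coxForm_eq, Finset.sum_comm]
  apply Finset.sum_congr rfl; intro s _
  apply Finset.sum_congr rfl; intro t _
  rw [K_symm]; ring

theorem coxForm_add_right (ξ η₁ η₂ : B → ℝ) :
    coxForm M ξ (η₁ + η₂) = coxForm M ξ η₁ + coxForm M ξ η₂ := by
  simp only [coxForm_eq, ← Finset.sum_add_distrib, Pi.add_apply]
  apply Finset.sum_congr rfl; intro s _
  apply Finset.sum_congr rfl; intro t _
  ring

theorem coxForm_smul_right (r : ℝ) (ξ η : B → ℝ) :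
    coxForm M ξ (r • η) = r * coxForm M ξ η := by
  simp only [coxForm_eq, Finset.mul_sum, Pi.smul_apply, smul_eq_mul]
  apply Finset.sum_congr rfl; intro s _
  apply Finset.sum_congr rfl; intro t _
  ring

theorem coxForm_sub_right (ξ η₁ η₂ : B → ℝ) :
    coxForm M ξ (η₁ - η₂) = coxForm M ξ η₁ - coxForm M ξ η₂ := by
  have := coxForm_add_right M ξ (η₁ - η₂) η₂
  simp at this; linarith

theorem coxForm_add_left (ξ₁ ξ₂ η : B → ℝ) :
    coxForm M (ξ₁ + ξ₂) η = coxForm M ξ₁ η + coxForm M ξ₂ η := by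
  rw [coxForm_symm, coxForm_add_right, coxForm_symm M η, coxForm_symm M η]

theorem coxForm_smul_left (r : ℝ) (ξ η : B → ℝ) :
    coxForm M (r • ξ) η = r * coxForm M ξ η := by
  rw [coxForm_symm, coxForm_smul_right, coxForm_symm]

theorem coxForm_sub_left (ξ₁ ξ₂ η : B → ℝ) :
    coxForm M (ξ₁ - ξ₂) η = coxForm M ξ₁ η - coxForm M ξ₂ η := by
  rw [coxForm_symm, coxForm_sub_right, coxForm_symm M η, coxForm_symm M η]

theorem coxForm_single_left (s : B) (η : B → ℝ) :
    coxForm M (Pi.single s 1) η = ∑ t : B, η t * K M s t := by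
  rw [coxForm_eq]
  rw [Finset.sum_eq_single s]
  · apply Finset.sum_congr rfl; intro t _
    simp [Pi.single_apply]
  · intro b _ hb
    apply Finset.sum_eq_zero; intro t _
    simp [Pi.single_apply, Ne.symm hb]
  · intro hs; exact absurd (Finset.mem_univ s) hs

theorem coxForm_single_single (s t : B) :
    coxForm M (Pi.single s 1) (Pi.single t 1) = K M s t := by
  rw [coxForm_single_left, Finset.sum_eq_single t]
  · simp [Pi.single_apply]
  · intro b _ hb; simp [Pi.single_apply, hb]
  · intro hs; exact absurd (Finset.mem_univ t) hs

theorem coxForm_self_single (s : B) :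
    coxForm M (Pi.single s 1) (Pi.single s 1) = 1 := by
  rw [coxForm_single_single]; simp [K]

-- Chebyshev-type sequence
noncomputable def chebC (m : ℕ) : ℝ := if m = 0 then 1 else Real.cos (π / m)

noncomputable def chebU (m : ℕ) (j : ℕ) : ℝ :=
  if m = 0 then j else Real.sin (j * (π / m)) / Real.sin (π / m)

theorem chebU_zero (m : ℕ) : chebU m 0 = 0 := by
  unfold chebU; split <;> simp

theorem chebU_one {m : ℕ} (h1 : m ≠ 1) : chebU m 1 = 1 := by
  unfold chebU
  by_cases h0 : m = 0
  · rw [if_pos h0]; norm_num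
  rw [if_neg h0]
  have hm2 : (2:ℝ) ≤ m := by
    have : 2 ≤ m := by omega
    exact_mod_cast this
  have hpos : 0 < Real.sin (π / m) := by
    apply Real.sin_pos_of_pos_of_lt_pi
    · positivity
    · rw [div_lt_iff₀ (by linarith)]
      nlinarith [Real.pi_pos]
  rw [Nat.cast_one, one_mul, div_self (ne_of_gt hpos)]

theorem chebU_rec (m : ℕ) (j : ℕ) :
    chebU m (j + 2) = 2 * chebC m * chebU m (j + 1) - chebU m j := by
  unfold chebU chebC
  by_cases h0 : m = 0
  · rw [if_pos h0, if_pos h0, if_pos h0, if_pos h0]; push_cast; ring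
  · rw [if_neg h0, if_neg h0, if_neg h0, if_neg h0]
    push_cast
    rw [show ((j:ℝ) + 2) * (π / m) = ((j:ℝ) + 1) * (π / m) + π / m by ring, Real.sin_add,
      show (j:ℝ) * (π / m) = ((j:ℝ) + 1) * (π / m) - π / m by ring, Real.sin_sub]
    ring

theorem chebU_nonneg {m : ℕ} (j : ℕ) (h : m = 0 ∨ j ≤ m) : 0 ≤ chebU m j := by
  unfold chebU
  rcases h with h | h
  · rw [if_pos h]; positivity
  · by_cases h0 : m = 0
    · rw [if_pos h0]; positivity
    · rw [if_neg h0]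
      have hm1 : (1:ℝ) ≤ m := by
        have : 1 ≤ m := by omega
        exact_mod_cast this
      have hjm : (j:ℝ) ≤ m := by exact_mod_cast h
      apply div_nonneg
      · apply Real.sin_nonneg_of_nonneg_of_le_pi
        · positivity
        · rw [← mul_one π]
          calc (j:ℝ) * (π * 1 / m) ≤ (m:ℝ) * (π * 1/ m) := by
                apply mul_le_mul_of_nonneg_right hjm; positivity
            _ = π * 1 := by field_simp
      · apply Real.sin_nonneg_of_nonneg_of_le_pi
        · positivity
        · rw [div_le_iff₀ (by linarith)]
          nlinarith [Real.pi_pos]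

variable {B : Type*} [Fintype B] [DecidableEq B]
variable {W : Type*} [Group W] {M : CoxeterMatrix B} (cs : CoxeterSystem M W)
variable (ρ : W →* ((B → ℝ) ≃ₗ[ℝ] (B → ℝ)))

theorem K_eq_neg_chebC {a b : B} (hab : a ≠ b) : K M a b = -chebC (M.M a b) := by
  unfold K chebC
  rw [if_neg hab]
  split <;> simp

variable (hρ : ∀ (s : B) (ξ : B → ℝ),
      ρ (cs.simple s) ξ = ξ - (2 * coxForm M (Pi.single s 1) ξ) • (Pi.single s (1:ℝ) : B → ℝ))

theorem rho_mul_apply (a b : W) (ξ : B → ℝ) : ρ (a * b) ξ = ρ a (ρ b ξ) := by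
  rw [map_mul]; rfl

theorem rho_one_apply (ξ : B → ℝ) : ρ (1 : W) ξ = ξ := by
  rw [map_one]; rfl

theorem rho_inv_cancel (w : W) (ξ : B → ℝ) : ρ w⁻¹ (ρ w ξ) = ξ := by
  rw [← rho_mul_apply, inv_mul_cancel, rho_one_apply]

include hρ

theorem coxForm_single_apply (s : B) (ξ : B → ℝ) :
    coxForm M (Pi.single s 1)
        (ξ - (2 * coxForm M (Pi.single s 1) ξ) • (Pi.single s (1:ℝ) : B → ℝ))
      = - coxForm M (Pi.single s 1) ξ := by
  rw [coxForm_sub_right, coxForm_smul_right, coxForm_self_single]; ring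

theorem coxForm_rho_simple (s : B) (ξ η : B → ℝ) :
    coxForm M (ρ (cs.simple s) ξ) (ρ (cs.simple s) η) = coxForm M ξ η := by
  rw [hρ, hρ]
  rw [coxForm_sub_left, coxForm_smul_left, coxForm_sub_right, coxForm_sub_right,
    coxForm_smul_right, coxForm_smul_right, coxForm_self_single,
    coxForm_symm M (Pi.single s 1) ξ]
  ring

theorem coxForm_rho (w : W) : ∀ (ξ η : B → ℝ),
    coxForm M (ρ w ξ) (ρ w η) = coxForm M ξ η := by
  induction w using cs.simple_induction_left with
  | one => intro ξ η; rw [rho_one_apply, rho_one_apply]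
  | mul_simple_left w i ih =>
      intro ξ η
      rw [rho_mul_apply, rho_mul_apply, coxForm_rho_simple cs ρ hρ, ih]




theorem rho_plane (a b : B) (hab : a ≠ b) (x y : ℝ) :
    ρ (cs.simple a) (x • (Pi.single a (1:ℝ) : B → ℝ) + y • (Pi.single b (1:ℝ) : B → ℝ))
      = (2 * chebC (M.M a b) * y - x) • (Pi.single a (1:ℝ) : B → ℝ)
        + y • (Pi.single b (1:ℝ) : B → ℝ) := by
  rw [hρ]
  have h1 : coxForm M (Pi.single a 1)
      (x • (Pi.single a (1:ℝ) : B → ℝ) + y • (Pi.single b (1:ℝ) : B → ℝ))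
      = x - y * chebC (M.M a b) := by
    rw [coxForm_add_right, coxForm_smul_right, coxForm_smul_right, coxForm_self_single,
      coxForm_single_single, K_eq_neg_chebC hab]
    ring
  rw [h1]
  module

theorem trig (a b : B) (hab : a ≠ b) : ∀ (k : ℕ), (M.M a b = 0 ∨ k + 1 ≤ M.M a b) →
    ρ (cs.wordProd (CoxeterSystem.alternatingWord a b k)) (Pi.single a 1)
      = (if Even k then chebU (M.M a b) (k+1) else chebU (M.M a b) k) •
          (Pi.single a (1:ℝ) : B → ℝ)
        + (if Even k then chebU (M.M a b) k else chebU (M.M a b) (k+1)) •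
          (Pi.single b (1:ℝ) : B → ℝ) := by
  intro k
  induction k with
  | zero =>
      intro _
      have h1 : chebU (M.M a b) 1 = 1 := chebU_one (M.off_diagonal a b hab)
      simp [CoxeterSystem.alternatingWord, rho_one_apply, h1, chebU_zero]
  | succ k ih =>
      intro hk
      have hk' : M.M a b = 0 ∨ k + 1 ≤ M.M a b := by omega
      rw [CoxeterSystem.alternatingWord_succ', cs.wordProd_cons, rho_mul_apply, ih hk']
      by_cases h : Even k
      · have hko : ¬ Even (k + 1) := by rw [Nat.even_add_one]; simpa using h
        rw [if_pos h, if_pos h, if_pos h, if_neg hko, if_neg hko]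
        have hplane := rho_plane cs ρ hρ b a hab.symm (chebU (M.M a b) k) (chebU (M.M a b) (k+1))
        rw [M.symmetric b a] at hplane
        rw [add_comm (chebU (M.M a b) (k+1) • (Pi.single a (1:ℝ) : B → ℝ))
          (chebU (M.M a b) k • (Pi.single b (1:ℝ) : B → ℝ)), hplane, ← chebU_rec]
        rw [show k + 1 + 1 = k + 2 from rfl]
        exact add_comm _ _
      · have hke : Even (k + 1) := Nat.even_add_one.mpr h
        rw [if_neg h, if_neg h, if_neg h, if_pos hke, if_pos hke]
        rw [rho_plane cs ρ hρ a b hab (chebU (M.M a b) k) (chebU (M.M a b) (k+1)), ← chebU_rec]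


omit hρ in
theorem peel : ∀ (n : ℕ) (w : W) (a b : B), a ≠ b → cs.length w ≤ n →
    cs.IsRightDescent w b → ¬ cs.IsRightDescent w a →
    ∃ (v : W) (k : ℕ), 1 ≤ k ∧ w = v * cs.wordProd (CoxeterSystem.alternatingWord a b k) ∧
      cs.length w = cs.length v + k ∧ ¬ cs.IsRightDescent v a ∧ ¬ cs.IsRightDescent v b := by
  intro n
  induction n with
  | zero =>
      intro w a b hab hlen hdb hda
      have hw : w = 1 := cs.length_eq_zero_iff.mp (by omega)
      subst hw
      exact absurd hdb (cs.not_isRightDescent_one b)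
  | succ n ih =>
      intro w a b hab hlen hdb hda
      have hlw1 : cs.length (w * cs.simple b) + 1 = cs.length w := cs.isRightDescent_iff.mp hdb
      have hndb : ¬ cs.IsRightDescent (w * cs.simple b) b :=
        (cs.isRightDescent_iff_not_isRightDescent_mul).mp hdb
      by_cases hda1 : cs.IsRightDescent (w * cs.simple b) a
      · obtain ⟨v, k, hk1, heq, hsum, hvb, hva⟩ :=
          ih (w * cs.simple b) b a hab.symm (by omega) hda1 hndb
        refine ⟨v, k + 1, by omega, ?_, by omega, hva, hvb⟩
        rw [CoxeterSystem.alternatingWord_succ, cs.wordProd_concat, ← mul_assoc, ← heq,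
          cs.simple_mul_simple_cancel_right]
      · refine ⟨w * cs.simple b, 1, le_refl 1, ?_, by omega, hda1, hndb⟩
        have h1 : CoxeterSystem.alternatingWord a b 1 = [b] := rfl
        rw [h1, cs.wordProd_singleton, cs.simple_mul_simple_cancel_right]

theorem main : ∀ (n : ℕ) (w : W) (i : B), cs.length w ≤ n → ¬ cs.IsRightDescent w i →
    ∀ j, 0 ≤ ρ w (Pi.single i 1) j := by
  intro n
  induction n with
  | zero =>
      intro w i hlen _ j
      have hw : w = 1 := cs.length_eq_zero_iff.mp (by omega)
      subst hw
      rw [rho_one_apply]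
      rcases eq_or_ne j i with rfl | hji
      · simp
      · simp [Pi.single_apply, hji]
  | succ n ih =>
      intro w i hlen hdi
      by_cases hle : cs.length w ≤ n
      · exact ih w i hle hdi
      have hlw : cs.length w = n + 1 := by omega
      have hne : w ≠ 1 := by
        intro h; subst h; rw [cs.length_one] at hlw; omega
      obtain ⟨t, hdt⟩ := cs.exists_rightDescent_of_ne_one hne
      have hit : i ≠ t := by rintro rfl; exact hdi hdt
      obtain ⟨v, k, hk1, heq, hsum, hva, hvb⟩ := peel cs (n+1) w i t hit hlen hdt hdi
      set u := cs.wordProd (CoxeterSystem.alternatingWord i t k) with hu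
      have husi : u * cs.simple i = cs.wordProd (CoxeterSystem.alternatingWord t i (k+1)) := by
        rw [CoxeterSystem.alternatingWord_succ, cs.wordProd_concat]
      have hlu_le : cs.length u ≤ k := by
        have := cs.length_wordProd_le (CoxeterSystem.alternatingWord i t k)
        rwa [CoxeterSystem.length_alternatingWord] at this
      have hlw_le : cs.length w ≤ cs.length v + cs.length u := by
        rw [heq]; exact cs.length_mul_le v u
      have hlu : cs.length u = k := by omega
      have hwsi : cs.length (w * cs.simple i) = cs.length w + 1 := cs.not_isRightDescent_iff.mp hdi
      have husi_le : cs.length (u * cs.simple i) ≤ k + 1 := by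
        rw [husi]
        have := cs.length_wordProd_le (CoxeterSystem.alternatingWord t i (k+1))
        rwa [CoxeterSystem.length_alternatingWord] at this
      have husi_ge : k + 1 ≤ cs.length (u * cs.simple i) := by
        have h1 : w * cs.simple i = v * (u * cs.simple i) := by rw [heq, mul_assoc]
        have h2 := cs.length_mul_le v (u * cs.simple i)
        rw [← h1] at h2
        omega
      have hM : M.M i t = 0 ∨ k + 1 ≤ M.M i t := by
        by_cases h0 : M.M i t = 0
        · exact Or.inl h0
        · right
          by_contra hgt
          push_neg at hgt
          have hred : cs.IsReduced (CoxeterSystem.alternatingWord t i (k+1)) := by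
            unfold CoxeterSystem.IsReduced
            rw [CoxeterSystem.length_alternatingWord, ← husi]
            omega
          have hMti : M.M t i ≠ 0 := by rwa [M.symmetric t i]
          have hgt' : k + 1 > M.M t i := by rw [M.symmetric t i]; omega
          exact cs.not_isReduced_alternatingWord t i hMti hgt' hred
      have htrig := trig cs ρ hρ i t hit k hM
      have hx : 0 ≤ (if Even k then chebU (M.M i t) (k+1) else chebU (M.M i t) k) := by
        split <;> exact chebU_nonneg _ (by omega)
      have hy : 0 ≤ (if Even k then chebU (M.M i t) k else chebU (M.M i t) (k+1)) := by
        split <;> exact chebU_nonneg _ (by omega)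
      intro j
      have hlv : cs.length v ≤ n := by omega
      have hvi := ih v i hlv hva j
      have hvt := ih v t hlv hvb j
      rw [heq, rho_mul_apply, hu, htrig, map_add, map_smul, map_smul]
      simp only [Pi.add_apply, Pi.smul_apply, smul_eq_mul]
      have := mul_nonneg hx hvi
      have := mul_nonneg hy hvt
      linarith


/-- root predicate -/
def IsRt (β : B → ℝ) : Prop := ∃ (w : W) (i : B), β = ρ w (Pi.single i 1)

omit hρ in
theorem coxForm_zero_zero : coxForm M (0 : B → ℝ) (0 : B → ℝ) = 0 := by
  have h := coxForm_smul_left M 0 (0 : B → ℝ) (0 : B → ℝ)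
  rw [zero_smul] at h
  rw [h, zero_mul]

theorem root_norm {β : B → ℝ} (hβ : IsRt ρ β) : coxForm M β β = 1 := by
  obtain ⟨w, i, rfl⟩ := hβ
  rw [coxForm_rho cs ρ hρ, coxForm_self_single]

theorem root_ne_zero {β : B → ℝ} (hβ : IsRt ρ β) : β ≠ 0 := by
  intro h
  have := root_norm cs ρ hρ hβ
  rw [h, coxForm_zero_zero] at this
  norm_num at this

theorem rho_simple_self (i : B) : ρ (cs.simple i) (Pi.single i 1) = - Pi.single i 1 := by
  rw [hρ, coxForm_self_single]
  module

omit hρ in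
theorem root_neg {β : B → ℝ} (hβ : IsRt ρ β)
    (hρ' : ∀ (s : B) (ξ : B → ℝ),
      ρ (cs.simple s) ξ = ξ - (2 * coxForm M (Pi.single s 1) ξ) • (Pi.single s (1:ℝ) : B → ℝ)) :
    IsRt ρ (-β) := by
  obtain ⟨w, i, rfl⟩ := hβ
  refine ⟨w * cs.simple i, i, ?_⟩
  rw [rho_mul_apply, rho_simple_self cs ρ hρ', map_neg]

theorem root_dichotomy {β : B → ℝ} (hβ : IsRt ρ β) :
    (∀ j, 0 ≤ β j) ∨ (∀ j, β j ≤ 0) := by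
  obtain ⟨w, i, rfl⟩ := hβ
  by_cases hd : cs.IsRightDescent w i
  · right
    have hrw : w = (w * cs.simple i) * cs.simple i := by
      rw [cs.simple_mul_simple_cancel_right]
    have hnd : ¬ cs.IsRightDescent (w * cs.simple i) i :=
      cs.isRightDescent_iff_not_isRightDescent_mul.mp hd
    have hpos := main cs ρ hρ (cs.length (w * cs.simple i)) (w * cs.simple i) i le_rfl hnd
    intro j
    have : ρ w (Pi.single i 1) = - ρ (w * cs.simple i) (Pi.single i 1) := by
      conv_lhs => rw [hrw]
      rw [rho_mul_apply, rho_simple_self cs ρ hρ, map_neg]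
    rw [this]
    simpa using hpos j
  · left
    exact main cs ρ hρ (cs.length w) w i le_rfl hd

variable (c : (B → ℝ) →ₗ[ℝ] ℝ) (hc : ∀ s : B, 0 < c (Pi.single s 1))

omit hρ in
theorem vec_eq_sum (β : B → ℝ) : β = ∑ j : B, β j • (Pi.single j (1:ℝ) : B → ℝ) := by
  funext j'
  rw [Finset.sum_apply, Finset.sum_eq_single j']
  · simp
  · intro b _ hb
    simp [Pi.single_apply, Ne.symm hb]
  · intro h; exact absurd (Finset.mem_univ j') h

include hc in
omit hρ [Group W] in
theorem c_pos_of_nonneg {β : B → ℝ} (hpos : ∀ j, 0 ≤ β j) (hne : β ≠ 0) : 0 < c β := by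
  conv_lhs => rw [show (0:ℝ) = c 0 from (map_zero c).symm]
  rw [map_zero]
  conv_rhs => rw [vec_eq_sum β]
  rw [map_sum]
  have hex : ∃ j, β j ≠ 0 := by
    by_contra h
    push_neg at h
    exact hne (funext fun j => h j)
  obtain ⟨j₀, hj₀⟩ := hex
  apply Finset.sum_pos'
  · intro j _
    rw [map_smul, smul_eq_mul]
    exact mul_nonneg (hpos j) (le_of_lt (hc j))
  · refine ⟨j₀, Finset.mem_univ j₀, ?_⟩
    rw [map_smul, smul_eq_mul]
    have : 0 < β j₀ := lt_of_le_of_ne (hpos j₀) (Ne.symm hj₀)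
    exact mul_pos this (hc j₀)

include hc in
theorem root_trichotomy {β : B → ℝ} (hβ : IsRt ρ β) :
    (0 < c β ∧ ∀ j, 0 ≤ β j) ∨ (c β < 0 ∧ ∀ j, β j ≤ 0) := by
  rcases root_dichotomy cs ρ hρ hβ with h | h
  · exact Or.inl ⟨c_pos_of_nonneg c hc h (root_ne_zero cs ρ hρ hβ), h⟩
  · right
    have hnegroot : IsRt ρ (-β) := root_neg cs ρ hβ hρ
    have hpos : ∀ j, 0 ≤ (-β) j := by intro j; simpa using h j
    have := c_pos_of_nonneg c hc hpos (root_ne_zero cs ρ hρ hnegroot)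
    rw [map_neg] at this
    exact ⟨by linarith, h⟩

include hc in
theorem root_nonneg_of_c_pos {β : B → ℝ} (hβ : IsRt ρ β) (h : 0 < c β) : ∀ j, 0 ≤ β j := by
  rcases root_trichotomy cs ρ hρ c hc hβ with ⟨_, h2⟩ | ⟨h1, _⟩
  · exact h2
  · linarith

include hc in
theorem root_c_ne_zero {β : B → ℝ} (hβ : IsRt ρ β) : c β ≠ 0 := by
  rcases root_trichotomy cs ρ hρ c hc hβ with ⟨h1, _⟩ | ⟨h1, _⟩ <;> intro h <;>
    rw [h] at h1 <;> norm_num at h1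

theorem srefl {i : B} {γ : B → ℝ} (hγ : IsRt ρ γ) (hpos : ∀ j, 0 ≤ γ j)
    (hne : γ ≠ Pi.single i 1) : ∀ j, 0 ≤ ρ (cs.simple i) γ j := by
  have hex : ∃ t, t ≠ i ∧ 0 < γ t := by
    by_contra h
    push_neg at h
    have hzero : ∀ t, t ≠ i → γ t = 0 := fun t ht => le_antisymm (h t ht) (hpos t)
    have hγi : γ = γ i • (Pi.single i (1:ℝ) : B → ℝ) := by
      funext j
      rcases eq_or_ne j i with rfl | hji
      · simp
      · simp [Pi.single_apply, hji, hzero j hji]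
    have h1 : coxForm M γ γ = γ i * γ i := by
      conv_lhs => rw [hγi]
      rw [coxForm_smul_left, coxForm_smul_right, coxForm_self_single]
      ring
    rw [root_norm cs ρ hρ hγ] at h1
    have h2 : 0 ≤ γ i := hpos i
    have h3 : γ i = 1 := by nlinarith
    rw [h3, one_smul] at hγi
    exact hne hγi
  obtain ⟨t, hti, hγt⟩ := hex
  have hroot : IsRt ρ (ρ (cs.simple i) γ) := by
    obtain ⟨w, l, rfl⟩ := hγ
    exact ⟨cs.simple i * w, l, by rw [rho_mul_apply]⟩
  rcases root_dichotomy cs ρ hρ hroot with h | h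
  · exact h
  · exfalso
    have hcoord : ρ (cs.simple i) γ t = γ t := by
      rw [hρ]
      simp [Pi.single_apply, hti]
    have := h t
    rw [hcoord] at this
    linarith


include hc in
theorem count : ∀ (ω : List B), cs.IsReduced ω →
    ∃ F : Finset (B → ℝ), F.card = ω.length ∧
      ∀ β, β ∈ F ↔ (IsRt ρ β ∧ (∀ j, 0 ≤ β j) ∧ c (ρ (cs.wordProd ω)⁻¹ β) < 0) := by
  intro ω
  induction ω using List.reverseRecOn with
  | nil =>
      intro _
      refine ⟨∅, rfl, fun β => ?_⟩
      simp only [Finset.notMem_empty, false_iff]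
      rintro ⟨hroot, hpos, hneg⟩
      rw [cs.wordProd_nil, inv_one, rho_one_apply] at hneg
      have := c_pos_of_nonneg c hc hpos (root_ne_zero cs ρ hρ hroot)
      linarith
  | append_singleton ω i ih =>
      intro hred
      have hconc : cs.wordProd (ω ++ [i]) = cs.wordProd ω * cs.simple i := by
        rw [← List.concat_eq_append, cs.wordProd_concat]
      have hlen : cs.length (cs.wordProd ω * cs.simple i) = ω.length + 1 := by
        have := hred
        unfold CoxeterSystem.IsReduced at this
        rw [hconc] at this
        simpa using this
      have hl1 : cs.length (cs.wordProd ω) ≤ ω.length := cs.length_wordProd_le ω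
      have hl2 := cs.length_mul_le (cs.wordProd ω) (cs.simple i)
      rw [cs.length_simple] at hl2
      have hredω : cs.IsReduced ω := by
        unfold CoxeterSystem.IsReduced
        omega
      have hnd : ¬ cs.IsRightDescent (cs.wordProd ω) i := by
        rw [cs.not_isRightDescent_iff]
        unfold CoxeterSystem.IsReduced at hredω
        omega
      obtain ⟨F, hcard, hchar⟩ := ih hredω
      set x := cs.wordProd ω with hx
      set nβ := ρ x (Pi.single i 1) with hnβ
      have hnewroot : IsRt ρ nβ := ⟨x, i, rfl⟩
      have hnewpos : ∀ j, 0 ≤ nβ j := main cs ρ hρ (cs.length x) x i le_rfl hnd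
      have hγeq : ρ x⁻¹ nβ = Pi.single i 1 := rho_inv_cancel ρ x _
      have hnotmem : nβ ∉ F := by
        intro hmem
        obtain ⟨_, _, hneg⟩ := (hchar nβ).mp hmem
        rw [hγeq] at hneg
        linarith [hc i]
      refine ⟨insert nβ F, ?_, ?_⟩
      · rw [Finset.card_insert_of_notMem hnotmem, hcard]
        simp
      intro β
      rw [Finset.mem_insert, hchar]
      have hinv : (cs.wordProd (ω ++ [i]))⁻¹ = cs.simple i * x⁻¹ := by
        rw [hconc, mul_inv_rev, cs.inv_simple]
      rw [hinv]
      constructor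
      · rintro (rfl | ⟨hroot, hpos, hneg⟩)
        · refine ⟨hnewroot, hnewpos, ?_⟩
          rw [rho_mul_apply, hγeq, rho_simple_self cs ρ hρ, map_neg]
          linarith [hc i]
        · refine ⟨hroot, hpos, ?_⟩
          rw [rho_mul_apply]
          set γ := ρ x⁻¹ β with hγ
          have hγroot : IsRt ρ γ := by
            obtain ⟨w, l, rfl⟩ := hroot
            exact ⟨x⁻¹ * w, l, by rw [rho_mul_apply]⟩
          have hnγroot : IsRt ρ (-γ) := root_neg cs ρ hγroot hρ
          have hnγpos : ∀ j, 0 ≤ (-γ) j := by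
            rcases root_trichotomy cs ρ hρ c hc hγroot with ⟨h1, _⟩ | ⟨_, h2⟩
            · linarith
            · intro j; simpa using h2 j
          have hnα : -γ ≠ Pi.single i 1 := by
            intro h
            have hβeq : β = -nβ := by
              have : γ = -(Pi.single i 1 : B → ℝ) := by
                rw [← h]; simp
              have hββ : β = ρ x γ := by
                rw [hγ, ← rho_mul_apply, mul_inv_cancel, rho_one_apply]
              rw [hββ, this, map_neg, hnβ]
            have hzero : β = 0 := by
              funext j
              have h1 := hpos j
              have h2 := hnewpos j
              have : β j = - nβ j := by rw [hβeq]; simp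
              simp only [Pi.zero_apply]
              linarith
            exact root_ne_zero cs ρ hρ hroot hzero
          have hsr := srefl cs ρ hρ hnγroot hnγpos hnα
          have hsrroot : IsRt ρ (ρ (cs.simple i) (-γ)) := by
            obtain ⟨w, l, hl⟩ := hnγroot
            exact ⟨cs.simple i * w, l, by rw [rho_mul_apply, ← hl]⟩
          have hpos' := c_pos_of_nonneg c hc hsr (root_ne_zero cs ρ hρ hsrroot)
          rw [map_neg, map_neg] at hpos'
          linarith
      · rintro ⟨hroot, hpos, hneg⟩
        rw [rho_mul_apply] at hneg
        set γ := ρ x⁻¹ β with hγ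
        have hγroot : IsRt ρ γ := by
          obtain ⟨w, l, rfl⟩ := hroot
          exact ⟨x⁻¹ * w, l, by rw [rho_mul_apply]⟩
        have hββ : β = ρ x γ := by
          rw [hγ, ← rho_mul_apply, mul_inv_cancel, rho_one_apply]
        rcases root_trichotomy cs ρ hρ c hc hγroot with ⟨h1, hγpos⟩ | ⟨h1, _⟩
        · left
          by_cases hγα : γ = Pi.single i 1
          · rw [hββ, hγα]
          · exfalso
            have hsr := srefl cs ρ hρ hγroot hγpos hγα
            have hsrroot : IsRt ρ (ρ (cs.simple i) γ) := by
              obtain ⟨w, l, hl⟩ := hγroot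
              exact ⟨cs.simple i * w, l, by rw [rho_mul_apply, ← hl]⟩
            have := c_pos_of_nonneg c hc hsr (root_ne_zero cs ρ hρ hsrroot)
            linarith
        · right
          exact ⟨hroot, hpos, h1⟩


omit hρ [Fintype B] [Group W] in
theorem ker_scale {β₁ β₂ : B → ℝ} (h2 : β₂ ≠ 0)
    (h : {f : (B → ℝ) →ₗ[ℝ] ℝ | f β₁ = 0} = {f : (B → ℝ) →ₗ[ℝ] ℝ | f β₂ = 0}) :
    ∃ r : ℝ, β₁ = r • β₂ := by
  have hfun : ∀ f : (B → ℝ) →ₗ[ℝ] ℝ, f β₂ = 0 → f β₁ = 0 := by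
    intro f hf
    have : f ∈ {f : (B → ℝ) →ₗ[ℝ] ℝ | f β₂ = 0} := hf
    rw [← h] at this
    exact this
  have hex : ∃ j, β₂ j ≠ 0 := by
    by_contra hcon
    push_neg at hcon
    exact h2 (funext fun j => hcon j)
  obtain ⟨j₀, hj₀⟩ := hex
  refine ⟨β₁ j₀ / β₂ j₀, funext fun i => ?_⟩
  have hf := hfun (β₂ j₀ • LinearMap.proj i - β₂ i • LinearMap.proj j₀
    : (B → ℝ) →ₗ[ℝ] ℝ) (by
      simp only [LinearMap.sub_apply, LinearMap.smul_apply, LinearMap.proj_apply,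
        smul_eq_mul]
      ring)
  simp only [LinearMap.sub_apply, LinearMap.smul_apply, LinearMap.proj_apply,
    smul_eq_mul] at hf
  have : β₁ i = (β₁ j₀ / β₂ j₀) * β₂ i := by
    field_simp
    linarith
  simpa using this

theorem pos_root_unique {β₁ β₂ : B → ℝ} (h₁ : IsRt ρ β₁) (h₂ : IsRt ρ β₂)
    (hp₁ : ∀ j, 0 ≤ β₁ j) (hp₂ : ∀ j, 0 ≤ β₂ j) {r : ℝ} (h : β₁ = r • β₂) : β₁ = β₂ := by
  have hn₁ : coxForm M β₁ β₁ = 1 := root_norm cs ρ hρ h₁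
  have hn₂ : coxForm M β₂ β₂ = 1 := root_norm cs ρ hρ h₂
  have hr2 : r * r = 1 := by
    have : coxForm M β₁ β₁ = r * (r * coxForm M β₂ β₂) := by
      conv_lhs => rw [h]
      rw [coxForm_smul_left, coxForm_smul_right]
    rw [hn₁, hn₂] at this
    linarith
  have hr : r = 1 ∨ r = -1 := by
    rcases mul_eq_zero.mp (show (r - 1) * (r + 1) = 0 by nlinarith) with h' | h'
    · left; linarith
    · right; linarith
  rcases hr with rfl | rfl
  · rw [h, one_smul]
  · exfalso
    apply root_ne_zero cs ρ hρ h₁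
    funext j
    have hj := hp₁ j
    have hj2 := hp₂ j
    have : β₁ j = -β₂ j := by rw [h]; simp
    simp only [Pi.zero_apply]
    linarith

omit hρ [Fintype B] [DecidableEq B] [Group W] in
theorem seg_iff (δ : B → ℝ) (p q : (B → ℝ) →ₗ[ℝ] ℝ) :
    ({f : (B → ℝ) →ₗ[ℝ] ℝ | f δ = 0} ∩ segment ℝ p q).Nonempty ↔ p δ * q δ ≤ 0 := by
  constructor
  · rintro ⟨z, hzker, hzseg⟩
    obtain ⟨a, b, ha, hb, hab, rfl⟩ := hzseg
    have hz : a * p δ + b * q δ = 0 := by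
      simpa [LinearMap.add_apply, LinearMap.smul_apply, smul_eq_mul] using hzker
    by_contra hlt
    push_neg at hlt
    have h2 : a * (p δ * q δ) + b * (q δ * q δ) = 0 := by
      have := congrArg (fun x => x * q δ) hz
      simp only [zero_mul] at this
      calc a * (p δ * q δ) + b * (q δ * q δ) = (a * p δ + b * q δ) * q δ := by ring
        _ = 0 := this
    have ha2 : 0 ≤ a * (p δ * q δ) := mul_nonneg ha (le_of_lt hlt)
    have hb2 : 0 ≤ b * (q δ * q δ) := mul_nonneg hb (mul_self_nonneg _)
    have haz : a * (p δ * q δ) = 0 := by linarith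
    have ha0 : a = 0 := by
      rcases mul_eq_zero.mp haz with h' | h'
      · exact h'
      · linarith
    have hb1 : b = 1 := by linarith
    rw [ha0, hb1] at hz
    have hq : q δ = 0 := by linarith
    rw [hq, mul_zero] at hlt
    exact lt_irrefl 0 hlt
  · intro hle
    rcases eq_or_ne (p δ) 0 with hp0 | hp0
    · exact ⟨p, hp0, left_mem_segment ℝ p q⟩
    rcases eq_or_ne (q δ) 0 with hq0 | hq0
    · exact ⟨q, hq0, right_mem_segment ℝ p q⟩
    have hlt : p δ * q δ < 0 := lt_of_le_of_ne hle (by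
      intro h'
      rcases mul_eq_zero.mp h' with h'' | h''
      · exact hp0 h''
      · exact hq0 h'')
    have hmem : ∀ a b : ℝ, 0 ≤ a → 0 ≤ b → a + b = 1 → a * p δ + b * q δ = 0 →
        ({f : (B → ℝ) →ₗ[ℝ] ℝ | f δ = 0} ∩ segment ℝ p q).Nonempty := by
      intro a b ha hb hab hz
      refine ⟨a • p + b • q, ?_, a, b, ha, hb, hab, rfl⟩
      show (a • p + b • q) δ = 0
      simpa [LinearMap.add_apply, LinearMap.smul_apply, smul_eq_mul] using hz
    rcases mul_neg_iff.mp hlt with ⟨h1, h2⟩ | ⟨h1, h2⟩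
    · -- 0 < p δ, q δ < 0
      have hD : q δ - p δ < 0 := by linarith
      refine hmem (q δ / (q δ - p δ)) (-(p δ) / (q δ - p δ)) ?_ ?_ ?_ ?_
      · exact div_nonneg_of_nonpos (le_of_lt h2) (le_of_lt hD)
      · exact div_nonneg_of_nonpos (by linarith) (le_of_lt hD)
      · field_simp [ne_of_lt hD]
        ring
      · field_simp [ne_of_lt hD]
        ring
    · -- p δ < 0, 0 < q δ
      have hD : 0 < q δ - p δ := by linarith
      refine hmem (q δ / (q δ - p δ)) (-(p δ) / (q δ - p δ)) ?_ ?_ ?_ ?_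
      · exact div_nonneg (le_of_lt h2) (le_of_lt hD)
      · exact div_nonneg (by linarith) (le_of_lt hD)
      · field_simp [ne_of_gt hD]
        ring
      · field_simp [ne_of_gt hD]
        ring


omit hρ in
theorem root_rho {β : B → ℝ} (hβ : IsRt ρ β) (x : W) : IsRt ρ (ρ x β) := by
  obtain ⟨w, l, rfl⟩ := hβ
  exact ⟨x * w, l, by rw [rho_mul_apply]⟩

end CoxAux

theorem stmt_4
    {B : Type*} [Fintype B] [DecidableEq B] {W : Type*} [Group W]
    {M : CoxeterMatrix B} (cs : CoxeterSystem M W)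
    -- the geometric representation `σ : W →* GL(V)`, `V = B → ℝ`,
    -- with `σ_s ξ = ξ - 2 B(αs, ξ) αs` on the simple reflections
    (ρ : W →* ((B → ℝ) ≃ₗ[ℝ] (B → ℝ)))
    (hρ : ∀ (s : B) (ξ : B → ℝ),
      ρ (cs.simple s) ξ = ξ - (2 * coxForm M (Pi.single s 1) ξ) • (Pi.single s (1:ℝ) : B → ℝ))
    -- the dual (adjoint) action on `V* = V →ₗ[ℝ] ℝ`: `(g • f)(ξ) = f (σ(g⁻¹) ξ)`
    (dualAct : W → ((B → ℝ) →ₗ[ℝ] ℝ) → ((B → ℝ) →ₗ[ℝ] ℝ))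
    (hdual : ∀ (g : W) (f : (B → ℝ) →ₗ[ℝ] ℝ) (ξ : B → ℝ),
      dualAct g f ξ = f ((ρ g⁻¹) ξ))
    -- the hyperplanes `Z_s = {f ∈ V* : f(αs) = 0}` and the family `H = ⋃_{g,s} g Z_s`
    (Zs : B → Set ((B → ℝ) →ₗ[ℝ] ℝ))
    (hZs : ∀ s, Zs s = {f | f (Pi.single s 1) = 0})
    (H : Set (Set ((B → ℝ) →ₗ[ℝ] ℝ)))
    (hH : H = {Z | ∃ (g : W) (s : B), Z = dualAct g '' Zs s})
    -- a point `c` of the open fundamental chamber `C = ⋂_s {f : f(αs) > 0}`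
    (c : (B → ℝ) →ₗ[ℝ] ℝ) (hc : ∀ s : B, 0 < c (Pi.single s 1))
    -- χ_g : the characteristic function of N^g = {Z ∈ H : [g·c, c] ∩ Z ≠ ∅}
    (χ : W → H → ℝ)
    (hχ : ∀ (g : W) (Z : H),
      (((Z : Set ((B → ℝ) →ₗ[ℝ] ℝ)) ∩ segment ℝ (dualAct g c) c).Nonempty → χ g Z = 1) ∧
      (¬ ((Z : Set ((B → ℝ) →ₗ[ℝ] ℝ)) ∩ segment ℝ (dualAct g c) c).Nonempty → χ g Z = 0))
    (g h : W) :
    (cs.length (g⁻¹ * h) : ℝ) = ∑' Z : H, |χ h Z - χ g Z| ^ 2 := by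
  classical
  set w : W := g⁻¹ * h with hwdef
  have hwinv : w⁻¹ = h⁻¹ * g := by rw [hwdef, mul_inv_rev, inv_inv]
  obtain ⟨ω, hred, hw⟩ := cs.exists_reduced_word' w
  have hlenw : cs.length w = ω.length := by rw [hw]; exact hred
  obtain ⟨F, hFcard, hFchar⟩ := CoxAux.count cs ρ hρ c hc ω hred
  have hFchar' : ∀ β, β ∈ F ↔ (CoxAux.IsRt ρ β ∧ (∀ j, 0 ≤ β j) ∧ c (ρ w⁻¹ β) < 0) := by
    intro β
    rw [hFchar β, ← hw]
  -- image description of hyperplanes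
  have himg : ∀ (u : W) (s₀ : B), dualAct u '' Zs s₀
      = {f : (B → ℝ) →ₗ[ℝ] ℝ | f (ρ u (Pi.single s₀ 1)) = 0} := by
    intro u s₀
    ext f
    simp only [Set.mem_image, hZs s₀, Set.mem_setOf_eq]
    constructor
    · rintro ⟨f₀, hf₀, rfl⟩
      rw [hdual, CoxAux.rho_inv_cancel]
      exact hf₀
    · intro hf
      refine ⟨dualAct u⁻¹ f, ?_, ?_⟩
      · rw [hdual, inv_inv]
        exact hf
      · apply LinearMap.ext
        intro ξ
        rw [hdual, hdual, CoxAux.rho_inv_cancel ρ u⁻¹ ξ]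
  have hmemH : ∀ β : B → ℝ, CoxAux.IsRt ρ β →
      {f : (B → ℝ) →ₗ[ℝ] ℝ | f (ρ g β) = 0} ∈ H := by
    rintro β ⟨u, l, rfl⟩
    rw [hH]
    refine ⟨g * u, l, ?_⟩
    rw [himg, ← CoxAux.rho_mul_apply]
  set T : Finset H := F.attach.image (fun b =>
    (⟨{f : (B → ℝ) →ₗ[ℝ] ℝ | f (ρ g b.1) = 0}, hmemH b.1 ((hFchar' b.1).mp b.2).1⟩ : H))
    with hT
  have hTcard : T.card = F.card := by
    rw [hT, Finset.card_image_of_injective _ ?inj, Finset.card_attach]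
    case inj =>
      intro b₁ b₂ hb
      have hroot₁ := ((hFchar' b₁.1).mp b₁.2).1
      have hroot₂ := ((hFchar' b₂.1).mp b₂.2).1
      have hpos₁ := ((hFchar' b₁.1).mp b₁.2).2.1
      have hpos₂ := ((hFchar' b₂.1).mp b₂.2).2.1
      have hsets : {f : (B → ℝ) →ₗ[ℝ] ℝ | f (ρ g b₁.1) = 0}
          = {f : (B → ℝ) →ₗ[ℝ] ℝ | f (ρ g b₂.1) = 0} := congrArg Subtype.val hb
      have hne₂ : ρ g b₂.1 ≠ 0 :=
        CoxAux.root_ne_zero cs ρ hρ (CoxAux.root_rho ρ hroot₂ g)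
      obtain ⟨r, hr⟩ := CoxAux.ker_scale hne₂ hsets
      have hb12 : b₁.1 = r • b₂.1 := by
        have h1 := congrArg (fun ξ => ρ g⁻¹ ξ) hr
        simp only [map_smul] at h1
        rw [CoxAux.rho_inv_cancel, CoxAux.rho_inv_cancel] at h1
        exact h1
      exact Subtype.ext (CoxAux.pos_root_unique cs ρ hρ hroot₁ hroot₂ hpos₁ hpos₂ hb12)
  have hterm : ∀ Z : H, |χ h Z - χ g Z| ^ 2 = (if Z ∈ T then (1:ℝ) else 0) := by
    intro Z
    obtain ⟨u, s₀, hZu⟩ : ∃ u s₀, (Z : Set ((B → ℝ) →ₗ[ℝ] ℝ)) = dualAct u '' Zs s₀ := by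
      have h2 : (Z : Set ((B → ℝ) →ₗ[ℝ] ℝ))
          ∈ {Z | ∃ (g : W) (s : B), Z = dualAct g '' Zs s} := by
        rw [← hH]
        exact Z.2
      exact h2
    have hZker : (Z : Set ((B → ℝ) →ₗ[ℝ] ℝ)) = {f | f (ρ u (Pi.single s₀ 1)) = 0} := by
      rw [hZu, himg]
    have hδ₀root : CoxAux.IsRt ρ (ρ u (Pi.single s₀ 1)) := ⟨u, s₀, rfl⟩
    obtain ⟨δ, hδroot, hδpos, hZδ⟩ : ∃ δ, CoxAux.IsRt ρ δ ∧ (∀ j, 0 ≤ δ j) ∧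
        (Z : Set ((B → ℝ) →ₗ[ℝ] ℝ)) = {f | f δ = 0} := by
      rcases CoxAux.root_dichotomy cs ρ hρ hδ₀root with hp | hn
      · exact ⟨_, hδ₀root, hp, hZker⟩
      · refine ⟨-(ρ u (Pi.single s₀ 1)), CoxAux.root_neg cs ρ hδ₀root hρ,
          fun j => by simpa using hn j, ?_⟩
        rw [hZker]
        ext f
        simp only [Set.mem_setOf_eq, map_neg, neg_eq_zero]
    have hcδ : 0 < c δ :=
      CoxAux.c_pos_of_nonneg c hc hδpos (CoxAux.root_ne_zero cs ρ hρ hδroot)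
    have hw2 : ρ w⁻¹ (ρ g⁻¹ δ) = ρ h⁻¹ δ := by
      rw [← CoxAux.rho_mul_apply, hwinv, mul_inv_cancel_right]
    have hχval : ∀ x : W, χ x Z = if c (ρ x⁻¹ δ) < 0 then 1 else 0 := by
      intro x
      have hrx : CoxAux.IsRt ρ (ρ x⁻¹ δ) := CoxAux.root_rho ρ hδroot x⁻¹
      have hcne : c (ρ x⁻¹ δ) ≠ 0 := CoxAux.root_c_ne_zero cs ρ hρ c hc hrx
      have hseg := CoxAux.seg_iff δ (dualAct x c) c
      have heval : (dualAct x c) δ = c (ρ x⁻¹ δ) := hdual x c δ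
      by_cases hneg : c (ρ x⁻¹ δ) < 0
      · rw [if_pos hneg]
        apply (hχ x Z).1
        rw [hZδ]
        apply hseg.mpr
        rw [heval]
        nlinarith
      · rw [if_neg hneg]
        apply (hχ x Z).2
        rw [hZδ]
        intro hcon
        have hle := hseg.mp hcon
        rw [heval] at hle
        have hgt : 0 < c (ρ x⁻¹ δ) := lt_of_le_of_ne (not_lt.mp hneg) (Ne.symm hcne)
        nlinarith
    have hZT : Z ∈ T ↔ ¬ ((c (ρ g⁻¹ δ) < 0) ↔ (c (ρ h⁻¹ δ) < 0)) := by
      constructor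
      · intro hmem
        rw [hT] at hmem
        obtain ⟨b, _, hbZ⟩ := Finset.mem_image.mp hmem
        obtain ⟨hroot, hpos, hcw⟩ := (hFchar' b.1).mp b.2
        have hsets : {f : (B → ℝ) →ₗ[ℝ] ℝ | f (ρ g b.1) = 0}
            = (Z : Set ((B → ℝ) →ₗ[ℝ] ℝ)) := congrArg Subtype.val hbZ
        rw [hZδ] at hsets
        have hnegβ : ρ g b.1 ≠ 0 := CoxAux.root_ne_zero cs ρ hρ (CoxAux.root_rho ρ hroot g)
        obtain ⟨r, hr⟩ := CoxAux.ker_scale hnegβ hsets.symm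
        have hn1 : coxForm M δ δ = 1 := CoxAux.root_norm cs ρ hρ hδroot
        have hn2 : coxForm M (ρ g b.1) (ρ g b.1) = 1 :=
          CoxAux.root_norm cs ρ hρ (CoxAux.root_rho ρ hroot g)
        have hr2 : r * r = 1 := by
          have h1 : coxForm M δ δ = r * (r * coxForm M (ρ g b.1) (ρ g b.1)) := by
            conv_lhs => rw [hr]
            rw [CoxAux.coxForm_smul_left, CoxAux.coxForm_smul_right]
          rw [hn1, hn2] at h1
          linarith
        have hcβ : 0 < c b.1 :=
          CoxAux.c_pos_of_nonneg c hc hpos (CoxAux.root_ne_zero cs ρ hρ hroot)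
        have hg' : c (ρ g⁻¹ δ) = r * c b.1 := by
          rw [hr, map_smul, CoxAux.rho_inv_cancel, map_smul, smul_eq_mul]
        have hh' : c (ρ h⁻¹ δ) = r * c (ρ w⁻¹ b.1) := by
          rw [hr, map_smul]
          rw [show ρ h⁻¹ (ρ g b.1) = ρ w⁻¹ b.1 by rw [← CoxAux.rho_mul_apply, ← hwinv]]
          rw [map_smul, smul_eq_mul]
        rcases mul_self_eq_one_iff.mp hr2 with rfl | rfl
        · rw [hg', hh', one_mul, one_mul]
          intro hiff
          have := hiff.mpr hcw
          linarith
        · rw [hg', hh', neg_one_mul, neg_one_mul]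
          intro hiff
          have h1 : -c b.1 < 0 := by linarith
          have h2 := hiff.mp h1
          linarith
      · intro hdiff
        have hgr : CoxAux.IsRt ρ (ρ g⁻¹ δ) := CoxAux.root_rho ρ hδroot g⁻¹
        have hgcne : c (ρ g⁻¹ δ) ≠ 0 := CoxAux.root_c_ne_zero cs ρ hρ c hc hgr
        have hhr : CoxAux.IsRt ρ (ρ h⁻¹ δ) := CoxAux.root_rho ρ hδroot h⁻¹
        have hhcne : c (ρ h⁻¹ δ) ≠ 0 := CoxAux.root_c_ne_zero cs ρ hρ c hc hhr
        have hcancel : ρ g (ρ g⁻¹ δ) = δ := by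
          have h1 := CoxAux.rho_inv_cancel ρ g⁻¹ δ
          rwa [inv_inv] at h1
        by_cases hA : c (ρ g⁻¹ δ) < 0
        · have hB : 0 < c (ρ h⁻¹ δ) := by
            rcases lt_or_gt_of_ne hhcne with h' | h'
            · exact absurd (Iff.intro (fun _ => h') (fun _ => hA)) hdiff
            · exact h'
          set β := -(ρ g⁻¹ δ) with hβ
          have hβroot : CoxAux.IsRt ρ β := CoxAux.root_neg cs ρ hgr hρ
          have hcβ : 0 < c β := by rw [hβ, map_neg]; linarith
          have hβpos := CoxAux.root_nonneg_of_c_pos cs ρ hρ c hc hβroot hcβ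
          have hcwβ : c (ρ w⁻¹ β) < 0 := by
            rw [hβ, map_neg, hw2, map_neg]
            linarith
          have hβF : β ∈ F := (hFchar' β).mpr ⟨hβroot, hβpos, hcwβ⟩
          have hρgβ : ρ g β = -δ := by rw [hβ, map_neg, hcancel]
          rw [hT]
          apply Finset.mem_image.mpr
          refine ⟨⟨β, hβF⟩, Finset.mem_attach _ _, ?_⟩
          apply Subtype.ext
          show {f : (B → ℝ) →ₗ[ℝ] ℝ | f (ρ g β) = 0} = (Z : Set ((B → ℝ) →ₗ[ℝ] ℝ))
          rw [hZδ, hρgβ]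
          ext f
          simp only [Set.mem_setOf_eq, map_neg, neg_eq_zero]
        · have hA' : 0 < c (ρ g⁻¹ δ) := lt_of_le_of_ne (not_lt.mp hA) (Ne.symm hgcne)
          have hB : c (ρ h⁻¹ δ) < 0 := by
            rcases lt_or_gt_of_ne hhcne with h' | h'
            · exact h'
            · exact absurd (Iff.intro (fun h'' => absurd h'' hA)
                (fun h'' => absurd h'' (not_lt.mpr (le_of_lt h')))) hdiff
          set β := ρ g⁻¹ δ with hβ
          have hβroot : CoxAux.IsRt ρ β := hgr
          have hβpos := CoxAux.root_nonneg_of_c_pos cs ρ hρ c hc hβroot hA'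
          have hcwβ : c (ρ w⁻¹ β) < 0 := by rw [hβ, hw2]; exact hB
          have hβF : β ∈ F := (hFchar' β).mpr ⟨hβroot, hβpos, hcwβ⟩
          rw [hT]
          apply Finset.mem_image.mpr
          refine ⟨⟨β, hβF⟩, Finset.mem_attach _ _, ?_⟩
          apply Subtype.ext
          show {f : (B → ℝ) →ₗ[ℝ] ℝ | f (ρ g β) = 0} = (Z : Set ((B → ℝ) →ₗ[ℝ] ℝ))
          rw [hZδ, hβ, hcancel]
    rw [hχval g, hχval h]
    by_cases hA : c (ρ g⁻¹ δ) < 0 <;> by_cases hB : c (ρ h⁻¹ δ) < 0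
    · have hnT : Z ∉ T := fun hmem => (hZT.mp hmem) ⟨fun _ => hB, fun _ => hA⟩
      rw [if_pos hA, if_pos hB, if_neg hnT]
      norm_num
    · have hiT : Z ∈ T := hZT.mpr (by tauto)
      rw [if_pos hA, if_neg hB, if_pos hiT]
      norm_num
    · have hiT : Z ∈ T := hZT.mpr (by tauto)
      rw [if_neg hA, if_pos hB, if_pos hiT]
      norm_num
    · have hnT : Z ∉ T := fun hmem =>
        (hZT.mp hmem) ⟨fun h' => absurd h' hA, fun h' => absurd h' hB⟩
      rw [if_neg hA, if_neg hB, if_neg hnT]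
      norm_num
  have hzero : ∀ Z ∉ T, |χ h Z - χ g Z| ^ 2 = 0 := fun Z hZ => by
    rw [hterm Z, if_neg hZ]
  rw [tsum_eq_sum hzero]
  have hone : ∀ Z ∈ T, |χ h Z - χ g Z| ^ 2 = (1:ℝ) := fun Z hZ => by
    rw [hterm Z, if_pos hZ]
  rw [Finset.sum_congr rfl hone, Finset.sum_const, nsmul_eq_mul, mul_one, hTcard, hFcard,
    ← hlenw]
end

section
/- Let (G,S) be a Coxeter system with word length function ℓ. For every t > 0, the function φ_t : G → ℂ, φ_t(g) = e^{-t·ℓ(g)}, is positive definite: for any g₁,...,gₙ ∈ G and c₁,...,cₙ ∈ ℂ, Σ_{i,j} cᵢ · conj(cⱼ) · e^{-t·ℓ(gᵢ⁻¹gⱼ)} ≥ 0. -/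
namespace CoxPD
open CoxeterSystem List

open scoped Classical

noncomputable section

variable {B : Type*} {W : Type*} [Group W] {M : CoxeterMatrix B} (cs : CoxeterSystem M W)

local prefix:100 "s" => cs.simple
local prefix:100 "π" => cs.wordProd
local prefix:100 "ℓ" => cs.length

/-- The basic involution underlying the reflection cocycle representation. -/
def phi (i : B) : Equiv.Perm (W × ZMod 2) :=
  Function.Involutive.toPerm
    (fun p => (s i * p.1 * s i, p.2 + if p.1 = s i then 1 else 0)) (by
      intro p
      have h2 : (s i * p.1 * s i = s i) ↔ (p.1 = s i) := by
        constructor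
        · intro h
          have := congrArg (fun x => s i * x * s i) h
          simp only [← mul_assoc] at this
          simpa [cs.simple_mul_simple_self, mul_assoc,
            cs.simple_mul_simple_cancel_left] using this
        · intro h; rw [h, cs.simple_mul_simple_self, one_mul]
      ext
      · show s i * (s i * p.1 * s i) * s i = p.1
        simp [mul_assoc, cs.simple_mul_simple_cancel_left,
          cs.simple_mul_simple_cancel_right]
      · show p.2 + _ + _ = p.2
        simp only [h2]
        rcases eq_or_ne p.1 (s i) with h | h <;>
          simp [h, add_assoc, CharTwo.add_self_eq_zero])

lemma phi_apply (i : B) (p : W × ZMod 2) :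
    phi cs i p = (s i * p.1 * s i, p.2 + if p.1 = s i then 1 else 0) := rfl

lemma eq_shift (u v c x : W) : (u * x * v = c) ↔ (x = u⁻¹ * c * v⁻¹) := by
  constructor
  · rintro rfl; group
  · rintro rfl; group

/-- `s i' * (s i * s i') = (s i * s i')⁻¹ * s i'`. -/
lemma hby (i i' : B) : s i' * (s i * s i') = (s i * s i')⁻¹ * s i' := by
  rw [mul_inv_rev, cs.inv_simple, cs.inv_simple, mul_assoc]

lemma grp1 (y b : W) (h : b * y = y⁻¹ * b) (k : ℕ) :
    y⁻¹ * ((y ^ k)⁻¹ * b) * y = (y ^ (2 + k))⁻¹ * b := by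
  calc y⁻¹ * ((y ^ k)⁻¹ * b) * y = y⁻¹ * (y ^ k)⁻¹ * (b * y) := by group
    _ = y⁻¹ * (y ^ k)⁻¹ * (y⁻¹ * b) := by rw [h]
    _ = (y ^ (2 + k))⁻¹ * b := by group

lemma grp2 (y x : W) (m : ℕ) :
    y ^ m * (y * x * y⁻¹) * (y ^ m)⁻¹ = y ^ (m + 1) * x * (y ^ (m + 1))⁻¹ := by group

lemma phi_mul_pow (i i' : B) (m : ℕ) (p : W × ZMod 2) :
    ((phi cs i * phi cs i') ^ m) p =
      ((s i * s i') ^ m * p.1 * ((s i * s i') ^ m)⁻¹,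
        p.2 + ∑ k ∈ Finset.range (2 * m),
          if p.1 = ((s i * s i') ^ k)⁻¹ * s i' then 1 else 0) := by
  induction m generalizing p with
  | zero => simp
  | succ m ih =>
    rw [pow_succ, Equiv.Perm.mul_apply, Equiv.Perm.mul_apply, phi_apply, phi_apply, ih]
    have key : ∀ x : W, s i * (s i' * x * s i') * s i = (s i * s i') * x * (s i * s i')⁻¹ := by
      intro x
      rw [mul_inv_rev, cs.inv_simple, cs.inv_simple]
      group
    have cond1 : (s i' * p.1 * s i' = s i) ↔ (p.1 = ((s i * s i') ^ 1)⁻¹ * s i') := by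
      rw [eq_shift]
      have : (s i')⁻¹ * s i * (s i')⁻¹ = ((s i * s i') ^ 1)⁻¹ * s i' := by
        rw [pow_one, mul_inv_rev, cs.inv_simple, cs.inv_simple]
      rw [this]
    have cond2 : ∀ k, ((s i * s i') * p.1 * (s i * s i')⁻¹ = ((s i * s i') ^ k)⁻¹ * s i')
        ↔ (p.1 = ((s i * s i') ^ (2 + k))⁻¹ * s i') := by
      intro k
      rw [eq_shift, inv_inv]
      rw [grp1 _ _ (hby cs i i') k]
    ext
    · simp only [key]
      exact grp2 _ _ m
    · simp only [key, cond2]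
      have h2m : 2 * (m + 1) = 2 + 2 * m := by ring
      rw [h2m, Finset.sum_range_add, Finset.sum_range_succ, Finset.sum_range_one]
      rw [pow_zero, inv_one, one_mul, ← cond1]
      push_cast
      abel

lemma isLiftable : M.IsLiftable (phi cs) := by
  intro i i'
  ext p
  · show (((phi cs i * phi cs i') ^ M i i') p).1 = p.1
    rw [phi_mul_pow, cs.simple_mul_simple_pow]
    simp
  · show (((phi cs i * phi cs i') ^ M i i') p).2 = p.2
    rw [phi_mul_pow]
    simp only
    have h2m : 2 * M i i' = M i i' + M i i' := by ring
    rw [h2m, Finset.sum_range_add]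
    have heq : ∀ k : ℕ, ((s i * s i') ^ (M i i' + k))⁻¹ * s i'
        = ((s i * s i') ^ k)⁻¹ * s i' := by
      intro k
      rw [pow_add, cs.simple_mul_simple_pow, one_mul]
    simp only [heq]
    rw [← two_mul]
    simp [CharTwo.two_eq_zero]

/-- The reflection cocycle representation `W →* Perm (W × ZMod 2)`. -/
def mu : W →* Equiv.Perm (W × ZMod 2) := cs.lift ⟨phi cs, isLiftable cs⟩

lemma mu_simple (i : B) : mu cs (s i) = phi cs i := cs.lift_apply_simple _ i

lemma mu_wordProd (ω : List B) (p : W × ZMod 2) :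
    mu cs (π ω) p = (π ω * p.1 * (π ω)⁻¹,
      p.2 + (List.count p.1 (cs.rightInvSeq ω) : ZMod 2)) := by
  induction ω generalizing p with
  | nil => simp
  | cons i ω ih =>
    rw [cs.wordProd_cons, map_mul, Equiv.Perm.mul_apply, ih, mu_simple, phi_apply]
    ext
    · show s i * (π ω * p.1 * (π ω)⁻¹) * s i
        = s i * π ω * p.1 * (s i * π ω)⁻¹
      rw [mul_inv_rev, cs.inv_simple]
      group
    · show p.2 + _ + _ = p.2 + _
      rw [CoxeterSystem.rightInvSeq]
      rw [List.count_cons]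
      have hcond : (π ω * p.1 * (π ω)⁻¹ = s i) ↔ (p.1 = (π ω)⁻¹ * s i * π ω) := by
        rw [eq_shift, inv_inv, mul_assoc]
      rcases eq_or_ne p.1 ((π ω)⁻¹ * s i * π ω) with h | h
      · have h2 : π ω * p.1 * (π ω)⁻¹ = s i := hcond.mpr h
        simp only [h2, if_true, ← h, beq_self_eq_true]
        push_cast
        ring
      · have h2 : ¬(π ω * p.1 * (π ω)⁻¹ = s i) := fun hc => h (hcond.mp hc)
        have h3 : ((π ω)⁻¹ * s i * π ω == p.1) = false := by
          simpa using fun hc => h hc.symm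
        simp only [h2, if_false, h3]
        push_cast
        ring

/-- Parity of the number of occurrences of `t` in any right inversion sequence of `w`. -/
def nu (w t : W) : ZMod 2 := (mu cs w (t, 0)).2

lemma nu_eq_count {w : W} {ω : List B} (hω : w = π ω) (t : W) :
    nu cs w t = (List.count t (cs.rightInvSeq ω) : ZMod 2) := by
  rw [nu, hω, mu_wordProd]
  simp

lemma mu_apply (w t : W) (z : ZMod 2) :
    mu cs w (t, z) = (w * t * w⁻¹, z + nu cs w t) := by
  obtain ⟨ω, _, rfl⟩ := cs.exists_reduced_word' w
  rw [mu_wordProd, nu_eq_count cs rfl]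

lemma nu_mul (u v t : W) : nu cs (u * v) t = nu cs v t + nu cs u (v * t * v⁻¹) := by
  have : mu cs (u * v) (t, 0) = mu cs u (mu cs v (t, 0)) := by
    rw [map_mul]; rfl
  rw [nu, this, mu_apply, mu_apply]
  simp

lemma nu_one (t : W) : nu cs 1 t = 0 := by
  have := nu_eq_count cs (cs.wordProd_nil).symm t
  simpa using this

lemma nu_inv (w t : W) : nu cs w⁻¹ t = nu cs w (w⁻¹ * t * w) := by
  have h := nu_mul cs w w⁻¹ t
  rw [mul_inv_cancel, nu_one] at h
  have h2 : w⁻¹ * t * (w⁻¹)⁻¹ = w⁻¹ * t * w := by rw [inv_inv]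
  rw [h2] at h
  -- h : 0 = nu cs w⁻¹ t + nu cs w (w⁻¹ * t * w)
  have := congrArg (fun x => x + nu cs w (w⁻¹ * t * w)) h
  simpa [add_assoc, CharTwo.add_self_eq_zero] using this.symm

lemma nu_simple_self (i : B) : nu cs (s i) (s i) = 1 := by
  have := nu_eq_count cs (cs.wordProd_singleton i).symm (s i)
  simpa using this

/-- `ν t t = 1` for any reflection `t`. -/
lemma nu_self_eq_one {t : W} (ht : cs.IsReflection t) : nu cs t t = 1 := by
  obtain ⟨w, i, rfl⟩ := ht
  set t := w * s i * w⁻¹ with hti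
  have h1 : nu cs t t = nu cs (s i * w⁻¹) t + nu cs w ((s i * w⁻¹) * t * (s i * w⁻¹)⁻¹) := by
    have : t = w * (s i * w⁻¹) := by rw [hti]; group
    nth_rw 1 [this]
    rw [nu_mul]
  have hc : (s i * w⁻¹) * t * (s i * w⁻¹)⁻¹ = s i := by
    rw [hti, mul_inv_rev, inv_inv, cs.inv_simple]
    calc s i * w⁻¹ * (w * s i * w⁻¹) * (w * s i)
        = s i * (w⁻¹ * w) * s i * (w⁻¹ * w) * s i := by group
      _ = s i := by
          simp [cs.simple_mul_simple_cancel_left, cs.simple_mul_simple_self]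
  have h2 : nu cs (s i * w⁻¹) t = nu cs w⁻¹ t + nu cs (s i) (w⁻¹ * t * w) := by
    have : w⁻¹ * t * (w⁻¹)⁻¹ = w⁻¹ * t * w := by rw [inv_inv]
    rw [nu_mul, this]
  have hc2 : w⁻¹ * t * w = s i := by
    rw [hti]
    group
  rw [h1, hc, h2, hc2, nu_simple_self, nu_inv, hc2]
  rw [add_comm (nu cs w (s i)) 1, add_assoc]
  simp [CharTwo.add_self_eq_zero]

lemma nu_eq_one_iff_mem {w : W} {ω : List B} (hr : cs.IsReduced ω) (hω : w = π ω) (t : W) :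
    nu cs w t = 1 ↔ t ∈ cs.rightInvSeq ω := by
  rw [nu_eq_count cs hω]
  constructor
  · intro h
    by_contra hmem
    rw [List.count_eq_zero.mpr hmem] at h
    simp at h
  · intro hmem
    rw [List.count_eq_one_of_mem (hr.nodup_rightInvSeq) hmem]
    simp

lemma length_lt_of_nu_eq_one {w t : W} (h : nu cs w t = 1) : ℓ (w * t) < ℓ w := by
  obtain ⟨ω, hr, hω⟩ := cs.exists_reduced_word' w
  have hmem : t ∈ cs.rightInvSeq ω := (nu_eq_one_iff_mem cs hr hω t).mp h
  have := cs.isRightInversion_of_mem_rightInvSeq hr hmem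
  rw [← hω] at this
  exact this.2

lemma nu_mul_self_reflection {t : W} (ht : cs.IsReflection t) (w : W) :
    nu cs (w * t) t = nu cs w t + 1 := by
  have h := nu_mul cs w t t
  rw [ht.mul_self, one_mul, ht.inv] at h
  rw [h, nu_self_eq_one cs ht, add_comm]

lemma isRightInversion_iff_nu_eq_one {w t : W} (ht : cs.IsReflection t) :
    cs.IsRightInversion w t ↔ nu cs w t = 1 := by
  constructor
  · intro hinv
    by_contra hne
    have h0 : nu cs w t = 0 := by
      have : ∀ x : ZMod 2, x ≠ 1 → x = 0 := by decide
      exact this _ hne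
    have h1 : nu cs (w * t) t = 1 := by rw [nu_mul_self_reflection cs ht, h0, zero_add]
    have h2 := length_lt_of_nu_eq_one cs h1
    rw [mul_assoc, ht.mul_self, mul_one] at h2
    exact absurd hinv.2 (Nat.lt_asymm h2)
  · intro h
    exact ⟨ht, length_lt_of_nu_eq_one cs h⟩

/-- The finset of right inversions of `w`. -/
def rset (w : W) : Finset W :=
  (cs.rightInvSeq (Classical.choose (cs.exists_reduced_word' w))).toFinset

lemma mem_rset (w t : W) : t ∈ rset cs w ↔ cs.IsRightInversion w t := by
  obtain ⟨hr, hω⟩ := Classical.choose_spec (cs.exists_reduced_word' w)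
  rw [rset, List.mem_toFinset]
  constructor
  · intro hmem
    have := cs.isRightInversion_of_mem_rightInvSeq hr hmem
    rwa [← hω] at this
  · intro hinv
    exact (nu_eq_one_iff_mem cs hr hω t).mp
      ((isRightInversion_iff_nu_eq_one cs hinv.1).mp hinv)

lemma card_rset (w : W) : (rset cs w).card = ℓ w := by
  obtain ⟨hr, hω⟩ := Classical.choose_spec (cs.exists_reduced_word' w)
  rw [rset, List.toFinset_card_of_nodup hr.nodup_rightInvSeq,
    cs.length_rightInvSeq, ← hr, ← hω]

lemma symmDiff_rset (g h : W) :
    symmDiff (rset cs g⁻¹) (rset cs h⁻¹)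
      = Finset.image (fun x => g * x * g⁻¹) (rset cs (h⁻¹ * g)) := by
  ext t
  rw [Finset.mem_symmDiff, Finset.mem_image]
  have himg : (∃ x ∈ rset cs (h⁻¹ * g), g * x * g⁻¹ = t)
      ↔ g⁻¹ * t * g ∈ rset cs (h⁻¹ * g) := by
    constructor
    · rintro ⟨x, hx, rfl⟩
      have : g⁻¹ * (g * x * g⁻¹) * g = x := by group
      rwa [this]
    · intro hx
      exact ⟨g⁻¹ * t * g, hx, by group⟩
  rw [himg, mem_rset, mem_rset, mem_rset]
  by_cases ht : cs.IsReflection t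
  · have htc : cs.IsReflection (g⁻¹ * t * g) := by
      have := (cs.isReflection_conj_iff g⁻¹ t).mpr ht
      rwa [inv_inv] at this
    rw [isRightInversion_iff_nu_eq_one cs ht, isRightInversion_iff_nu_eq_one cs ht,
      isRightInversion_iff_nu_eq_one cs htc]
    have hline : nu cs h⁻¹ t = nu cs g⁻¹ t + nu cs (h⁻¹ * g) (g⁻¹ * t * g) := by
      have := nu_mul cs (h⁻¹ * g) g⁻¹ t
      rw [inv_inv] at this
      rw [← this, mul_assoc, mul_inv_cancel, mul_one]
    rw [hline]
    generalize nu cs g⁻¹ t = A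
    generalize nu cs (h⁻¹ * g) (g⁻¹ * t * g) = C
    revert A C
    decide
  · have htc : ¬ cs.IsReflection (g⁻¹ * t * g) := by
      intro hc
      have := (cs.isReflection_conj_iff g⁻¹ t).mp (by rwa [inv_inv])
      exact ht this
    constructor
    · rintro (⟨h1, _⟩ | ⟨h1, _⟩) <;> exact absurd h1.1 ht
    · intro hc
      exact absurd hc.1 htc

/-- The key combinatorial identity: the word length of `g⁻¹ * h` is the size of the
symmetric difference of the (left) inversion sets of `g` and `h`. -/
lemma card_symmDiff (g h : W) :
    (symmDiff (rset cs g⁻¹) (rset cs h⁻¹)).card = ℓ (g⁻¹ * h) := by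
  have hinj : Function.Injective (fun x : W => g * x * g⁻¹) := by
    intro x y hxy
    simp only [mul_left_inj, mul_right_inj] at hxy
    exact hxy
  rw [symmDiff_rset, Finset.card_image_of_injective _ hinj, card_rset]
  have : (h⁻¹ * g)⁻¹ = g⁻¹ * h := by group
  rw [← this, cs.length_inv]

end

/-- Unit vectors in `ℝ²` realizing the kernel `(a, b) ↦ if a = b then 1 else exp (-t)`. -/
noncomputable def uvec (t : ℝ) : Bool → Fin 2 → ℝ
  | false => ![1, 0]
  | true => ![Real.exp (-t), Real.sqrt (1 - Real.exp (-t) ^ 2)]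

lemma dot_uvec {t : ℝ} (ht : 0 < t) (a b : Bool) :
    ∑ v : Fin 2, uvec t a v * uvec t b v = if a = b then 1 else Real.exp (-t) := by
  have hE1 : Real.exp (-t) ≤ 1 := Real.exp_le_one_iff.mpr (by linarith)
  have hE0 : 0 < Real.exp (-t) := Real.exp_pos _
  have hnn : 0 ≤ 1 - Real.exp (-t) ^ 2 := by nlinarith
  have hsq : Real.sqrt (1 - Real.exp (-t) ^ 2) * Real.sqrt (1 - Real.exp (-t) ^ 2)
      = 1 - Real.exp (-t) ^ 2 := Real.mul_self_sqrt hnn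
  cases a <;> cases b <;>
    simp [uvec, Fin.sum_univ_two] <;> nlinarith [hsq]

end CoxPD

set_option maxHeartbeats 1000000 in
open CoxPD in
/-- For a Coxeter system with word length `ℓ` and `t > 0`, the function
`g ↦ exp (-t ℓ(g))` is positive definite. -/
theorem stmt_5 {B : Type*} [Finite B] {W : Type*} [Group W]
    {M : CoxeterMatrix B} (cs : CoxeterSystem M W)
    (t : ℝ) (ht : 0 < t) (n : ℕ) (g : Fin n → W) (c : Fin n → ℂ) :
    0 ≤ (∑ i, ∑ j, c i * (starRingEnd ℂ) (c j) *
          (Real.exp (-t * (cs.length ((g i)⁻¹ * g j))) : ℂ)).re ∧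
    (∑ i, ∑ j, c i * (starRingEnd ℂ) (c j) *
          (Real.exp (-t * (cs.length ((g i)⁻¹ * g j))) : ℂ)).im = 0 := by
  classical
  set E := Real.exp (-t) with hE
  -- inversion sets
  set A : Fin n → Finset W := fun i => rset cs (g i)⁻¹ with hA
  set R₀ : Finset W := Finset.univ.biUnion A with hR₀
  -- membership indicator
  set X : Fin n → W → Bool := fun i r => decide (r ∈ A i) with hX
  -- Step 1 : length as cardinality of a filter of R₀
  have key1 : ∀ i j, (cs.length ((g i)⁻¹ * g j) : ℝ)
      = ((R₀.filter (fun r => ¬ (X i r = X j r))).card : ℝ) := by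
    intro i j
    have hcs := card_symmDiff cs (g i) (g j)
    have hset : symmDiff (A i) (A j) = R₀.filter (fun r => ¬ (X i r = X j r)) := by
      ext r
      rw [Finset.mem_symmDiff, Finset.mem_filter, Finset.mem_biUnion]
      constructor
      · rintro (⟨h1, h2⟩ | ⟨h1, h2⟩)
        · exact ⟨⟨i, Finset.mem_univ i, h1⟩, by simp [hX, h1, h2]⟩
        · exact ⟨⟨j, Finset.mem_univ j, h1⟩, by simp [hX, h1, h2]⟩
      · rintro ⟨-, hne⟩
        by_cases h1 : r ∈ A i <;> by_cases h2 : r ∈ A j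
        · exact absurd (by simp [hX, h1, h2]) hne
        · exact Or.inl ⟨h1, h2⟩
        · exact Or.inr ⟨h2, h1⟩
        · exact absurd (by simp [hX, h1, h2]) hne
    rw [← hcs, hset]
  -- Step 2 : the Gram kernel as a product over R₀
  have key2 : ∀ i j, Real.exp (-t * (cs.length ((g i)⁻¹ * g j)))
      = ∏ r ∈ R₀, (if X i r = X j r then (1 : ℝ) else E) := by
    intro i j
    rw [Finset.prod_ite, Finset.prod_const_one, one_mul, Finset.prod_const]
    rw [key1 i j]
    rw [mul_comm (-t), Real.exp_nat_mul]  -- may need fixing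
  -- Step 3 : kernel entries as dot products
  have key3 : ∀ i j, Real.exp (-t * (cs.length ((g i)⁻¹ * g j)))
      = ∏ r ∈ R₀, ∑ v : Fin 2, uvec t (X i r) v * uvec t (X j r) v := by
    intro i j
    rw [key2 i j]
    refine Finset.prod_congr rfl fun r _ => ?_
    rw [dot_uvec ht]
  -- Step 4 : expand product of sums; Gram representation
  set Φ : Fin n → ((↥R₀ → Fin 2)) → ℝ :=
    fun i f => ∏ r : ↥R₀, uvec t (X i ↑r) (f r) with hΦ
  have key4 : ∀ i j, Real.exp (-t * (cs.length ((g i)⁻¹ * g j)))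
      = ∑ f : ↥R₀ → Fin 2, Φ i f * Φ j f := by
    intro i j
    rw [key3 i j, ← Finset.prod_coe_sort]
    rw [show (∏ r : ↥R₀, ∑ v : Fin 2, uvec t (X i ↑r) v * uvec t (X j ↑r) v)
        = ∑ p ∈ Fintype.piFinset (fun _ : ↥R₀ => (Finset.univ : Finset (Fin 2))),
            ∏ r : ↥R₀, uvec t (X i ↑r) (p r) * uvec t (X j ↑r) (p r)
      from Finset.prod_univ_sum _ _]
    rw [Fintype.piFinset_univ]
    exact Finset.sum_congr rfl fun f _ => Finset.prod_mul_distrib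
  -- Step 5 : conclude positivity
  have main : (∑ i, ∑ j, c i * (starRingEnd ℂ) (c j) *
        (Real.exp (-t * (cs.length ((g i)⁻¹ * g j))) : ℂ))
      = ∑ f : ↥R₀ → Fin 2, ((Complex.normSq (∑ i, c i * (Φ i f : ℂ)) : ℝ) : ℂ) := by
    calc ∑ i, ∑ j, c i * (starRingEnd ℂ) (c j) *
          (Real.exp (-t * (cs.length ((g i)⁻¹ * g j))) : ℂ)
        = ∑ i, ∑ j, ∑ f : ↥R₀ → Fin 2,
            (c i * (Φ i f : ℂ)) * ((starRingEnd ℂ) (c j) * (Φ j f : ℂ)) := by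
          refine Finset.sum_congr rfl fun i _ => Finset.sum_congr rfl fun j _ => ?_
          rw [key4 i j]
          push_cast
          rw [Finset.mul_sum]
          exact Finset.sum_congr rfl fun f _ => by ring
      _ = ∑ f : ↥R₀ → Fin 2, ∑ i, ∑ j,
            (c i * (Φ i f : ℂ)) * ((starRingEnd ℂ) (c j) * (Φ j f : ℂ)) := by
          exact (Finset.sum_congr rfl fun i _ => Finset.sum_comm).trans Finset.sum_comm
      _ = ∑ f : ↥R₀ → Fin 2,
            (∑ i, c i * (Φ i f : ℂ)) * (∑ j, (starRingEnd ℂ) (c j) * (Φ j f : ℂ)) := by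
          exact Finset.sum_congr rfl fun f _ => (Finset.sum_mul_sum _ _ _ _).symm
      _ = ∑ f : ↥R₀ → Fin 2, ((Complex.normSq (∑ i, c i * (Φ i f : ℂ)) : ℝ) : ℂ) := by
          refine Finset.sum_congr rfl fun f _ => ?_
          have : (∑ j, (starRingEnd ℂ) (c j) * (Φ j f : ℂ))
              = (starRingEnd ℂ) (∑ j, c j * (Φ j f : ℂ)) := by
            rw [map_sum]
            exact Finset.sum_congr rfl fun j _ => by
              rw [map_mul, Complex.conj_ofReal]
          rw [this, Complex.mul_conj]
  rw [main]
  constructor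
  · rw [Complex.re_sum]
    refine Finset.sum_nonneg fun f _ => ?_
    rw [Complex.ofReal_re]
    exact Complex.normSq_nonneg _
  · rw [Complex.im_sum]
    refine Finset.sum_eq_zero fun f _ => ?_
    rw [Complex.ofReal_im]
end

section
/- (Schoenberg) Let G be a group and ψ : G → ℝ a function with ψ(e) = 0, ψ(g⁻¹) = ψ(g), which is conditionally negative definite. Then for every t > 0 the function g ↦ e^{-t·ψ(g)} is positive definite on G. -/
open Finset Matrix

namespace Stmt6Aux

variable {n : ℕ}

/-- nonnegativity of the real quadratic form -/
def Qf (M : Fin n → Fin n → ℝ) : Prop :=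
  ∀ x : Fin n → ℝ, 0 ≤ ∑ i, ∑ j, x i * x j * M i j

lemma posSemidef_of (M : Fin n → Fin n → ℝ) (hsym : ∀ i j, M i j = M j i) (h : Qf M) :
    (Matrix.of M).PosSemidef := by
  rw [Matrix.posSemidef_iff_dotProduct_mulVec]
  constructor
  · ext i j
    simp [Matrix.conjTranspose_apply, hsym i j]
  · intro x
    have hx : star x = x := star_trivial x
    have : dotProduct (star x) (Matrix.of M *ᵥ x) = ∑ i, ∑ j, x i * x j * M i j := by
      rw [hx]
      simp only [dotProduct, Matrix.mulVec, Matrix.of_apply, Finset.mul_sum]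
      exact Finset.sum_congr rfl fun i _ => Finset.sum_congr rfl fun j _ => by ring
    rw [this]; exact h x

lemma qf_of_posSemidef {M : Fin n → Fin n → ℝ} (h : (Matrix.of M).PosSemidef) : Qf M := by
  intro x
  have hx : star x = x := star_trivial x
  have h2 := h.dotProduct_mulVec_nonneg x
  rw [hx] at h2
  have : dotProduct x (Matrix.of M *ᵥ x) = ∑ i, ∑ j, x i * x j * M i j := by
    simp only [dotProduct, Matrix.mulVec, Matrix.of_apply, Finset.mul_sum]
    exact Finset.sum_congr rfl fun i _ => Finset.sum_congr rfl fun j _ => by ring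
  rwa [this] at h2

lemma sum4_comm {α : Type*} [AddCommMonoid α] {a b c d : ℕ}
    (f : Fin a → Fin b → Fin c → Fin d → α) :
    ∑ i, ∑ j, ∑ k, ∑ l, f i j k l = ∑ k, ∑ l, ∑ i, ∑ j, f i j k l := by
  calc ∑ i, ∑ j, ∑ k, ∑ l, f i j k l
      = ∑ i, ∑ k, ∑ j, ∑ l, f i j k l :=
        Finset.sum_congr rfl fun i _ => Finset.sum_comm
    _ = ∑ k, ∑ i, ∑ j, ∑ l, f i j k l := Finset.sum_comm
    _ = ∑ k, ∑ i, ∑ l, ∑ j, f i j k l :=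
        Finset.sum_congr rfl fun k _ => Finset.sum_congr rfl fun i _ => Finset.sum_comm
    _ = ∑ k, ∑ l, ∑ i, ∑ j, f i j k l :=
        Finset.sum_congr rfl fun k _ => Finset.sum_comm

open scoped MatrixOrder in
/-- Schur product theorem. -/
lemma psd_hadamard {A B : Fin n → Fin n → ℝ}
    (hA : (Matrix.of A).PosSemidef) (hB : (Matrix.of B).PosSemidef) :
    (Matrix.of fun i j => A i j * B i j).PosSemidef := by
  obtain ⟨X, hX⟩ := CStarAlgebra.nonneg_iff_eq_star_mul_self.mp hA.nonneg
  obtain ⟨Y, hY⟩ := CStarAlgebra.nonneg_iff_eq_star_mul_self.mp hB.nonneg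
  have hA' : ∀ i j, A i j = ∑ k, X k i * X k j := by
    intro i j
    have := congrFun (congrFun hX i) j
    simpa [Matrix.mul_apply, Matrix.star_apply] using this
  have hB' : ∀ i j, B i j = ∑ l, Y l i * Y l j := by
    intro i j
    have := congrFun (congrFun hY i) j
    simpa [Matrix.mul_apply, Matrix.star_apply] using this
  apply posSemidef_of
  · intro i j
    simp_rw [hA', hB']
    congr 1 <;> exact Finset.sum_congr rfl fun k _ => by ring
  · intro x
    have key : ∑ i, ∑ j, x i * x j * (A i j * B i j)
        = ∑ k, ∑ l, (∑ i, x i * X k i * Y l i) ^ 2 := by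
      calc ∑ i, ∑ j, x i * x j * (A i j * B i j)
          = ∑ i, ∑ j, ∑ k, ∑ l,
              (x i * X k i * Y l i) * (x j * X k j * Y l j) := by
            refine Finset.sum_congr rfl fun i _ => Finset.sum_congr rfl fun j _ => ?_
            rw [hA' i j, hB' i j, Finset.sum_mul_sum, Finset.mul_sum]
            refine Finset.sum_congr rfl fun k _ => ?_
            rw [Finset.mul_sum]
            exact Finset.sum_congr rfl fun l _ => by ring
        _ = ∑ k, ∑ l, ∑ i, ∑ j,
              (x i * X k i * Y l i) * (x j * X k j * Y l j) := sum4_comm _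
        _ = ∑ k, ∑ l, (∑ i, x i * X k i * Y l i) ^ 2 := by
            refine Finset.sum_congr rfl fun k _ => Finset.sum_congr rfl fun l _ => ?_
            rw [sq, Finset.sum_mul_sum]
    rw [key]
    exact Finset.sum_nonneg fun k _ => Finset.sum_nonneg fun l _ => sq_nonneg _

lemma psd_ones : (Matrix.of fun _ _ : Fin n => (1 : ℝ)).PosSemidef := by
  apply posSemidef_of
  · intro i j; rfl
  · intro x
    have : ∑ i, ∑ j, x i * x j * 1 = (∑ i, x i) ^ 2 := by
      rw [sq, Finset.sum_mul]
      exact Finset.sum_congr rfl fun i _ => by rw [Finset.mul_sum]; simp [mul_comm]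
    rw [this]; exact sq_nonneg _

lemma psd_smul {M : Fin n → Fin n → ℝ} {a : ℝ} (ha : 0 ≤ a)
    (hM : (Matrix.of M).PosSemidef) :
    (Matrix.of fun i j => a * M i j).PosSemidef := by
  apply posSemidef_of
  · intro i j
    have := hM.1
    have hsym : M i j = M j i := by
      have := congrFun (congrFun this.symm i) j
      simpa [Matrix.conjTranspose_apply] using this
    rw [hsym]
  · intro x
    have : ∑ i, ∑ j, x i * x j * (a * M i j) = a * ∑ i, ∑ j, x i * x j * M i j := by
      rw [Finset.mul_sum]
      refine Finset.sum_congr rfl fun i _ => ?_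
      rw [Finset.mul_sum]
      exact Finset.sum_congr rfl fun j _ => by ring
    rw [this]
    exact mul_nonneg ha (qf_of_posSemidef hM x)

lemma psd_add {M N : Fin n → Fin n → ℝ}
    (hM : (Matrix.of M).PosSemidef) (hN : (Matrix.of N).PosSemidef) :
    (Matrix.of fun i j => M i j + N i j).PosSemidef := by
  apply posSemidef_of
  · intro i j
    have h1 : M i j = M j i := by
      have := congrFun (congrFun hM.1.symm i) j
      simpa [Matrix.conjTranspose_apply] using this
    have h2 : N i j = N j i := by
      have := congrFun (congrFun hN.1.symm i) j
      simpa [Matrix.conjTranspose_apply] using this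
    rw [h1, h2]
  · intro x
    have : ∑ i, ∑ j, x i * x j * (M i j + N i j)
        = (∑ i, ∑ j, x i * x j * M i j) + ∑ i, ∑ j, x i * x j * N i j := by
      rw [← Finset.sum_add_distrib]
      refine Finset.sum_congr rfl fun i _ => ?_
      rw [← Finset.sum_add_distrib]
      exact Finset.sum_congr rfl fun j _ => by ring
    rw [this]
    exact add_nonneg (qf_of_posSemidef hM x) (qf_of_posSemidef hN x)

lemma psd_hpow {M : Fin n → Fin n → ℝ} (hM : (Matrix.of M).PosSemidef) (k : ℕ) :
    (Matrix.of fun i j => (M i j) ^ k).PosSemidef := by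
  induction k with
  | zero => simpa using psd_ones
  | succ k ih =>
      simpa only [← pow_succ] using psd_hadamard ih hM

lemma psd_partial {M : Fin n → Fin n → ℝ} (hM : (Matrix.of M).PosSemidef) (N : ℕ) :
    (Matrix.of fun i j => ∑ k ∈ Finset.range N, (M i j) ^ k / (Nat.factorial k : ℝ)).PosSemidef := by
  induction N with
  | zero => exact (Matrix.PosSemidef.zero (n := Fin n) (R := ℝ))
  | succ N ih =>
      have h1 : (Matrix.of fun i j => ((Nat.factorial N : ℝ))⁻¹ * (M i j) ^ N).PosSemidef :=
        psd_smul (by positivity) (psd_hpow hM N)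
      have := psd_add ih h1
      convert this using 2
      ext i j
      rw [Finset.sum_range_succ, div_eq_inv_mul]

lemma qf_limit {M : ℕ → Fin n → Fin n → ℝ} {L : Fin n → Fin n → ℝ}
    (h : ∀ N, Qf (M N))
    (hlim : ∀ i j, Filter.Tendsto (fun N => M N i j) Filter.atTop (nhds (L i j))) :
    Qf L := by
  intro x
  have : Filter.Tendsto (fun N => ∑ i, ∑ j, x i * x j * M N i j) Filter.atTop
      (nhds (∑ i, ∑ j, x i * x j * L i j)) := by
    refine tendsto_finset_sum _ fun i _ => tendsto_finset_sum _ fun j _ => ?_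
    exact (hlim i j).const_mul _
  exact ge_of_tendsto this (Filter.Eventually.of_forall fun N => h N x)

lemma qf_exp {M : Fin n → Fin n → ℝ} (hM : (Matrix.of M).PosSemidef) :
    Qf (fun i j => Real.exp (M i j)) := by
  apply qf_limit (M := fun N i j => ∑ k ∈ Finset.range N, (M i j) ^ k / (Nat.factorial k : ℝ))
  · intro N
    exact qf_of_posSemidef (psd_partial hM N)
  · intro i j
    have h := NormedSpace.expSeries_div_hasSum_exp (M i j)
    have := h.tendsto_sum_nat
    rwa [Real.exp_eq_exp_ℝ]

lemma sum_antisymm (f : Fin n → Fin n → ℝ) (hf : ∀ i j, f i j = - f j i) :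
    ∑ i, ∑ j, f i j = 0 := by
  have h1 : ∑ i, ∑ j, f i j = ∑ j, ∑ i, f i j := Finset.sum_comm
  have h2 : ∑ j, ∑ i, f i j = - ∑ j, ∑ i, f j i := by
    rw [← Finset.sum_neg_distrib]
    refine Finset.sum_congr rfl fun j _ => ?_
    rw [← Finset.sum_neg_distrib]
    exact Finset.sum_congr rfl fun i _ => hf i j
  linarith [h1, h2]

lemma im_zero (E : Fin n → Fin n → ℝ) (hE : ∀ i j, E i j = E j i) (c : Fin n → ℂ) :
    (∑ i, ∑ j, c i * (starRingEnd ℂ) (c j) * (E i j : ℂ)).im = 0 := by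
  rw [Complex.im_sum]
  have : ∀ i, (∑ j, c i * (starRingEnd ℂ) (c j) * (E i j : ℂ)).im
      = ∑ j, (c i * (starRingEnd ℂ) (c j)).im * E i j := by
    intro i
    rw [Complex.im_sum]
    exact Finset.sum_congr rfl fun j _ => by
      rw [Complex.mul_im]; simp
  simp_rw [this]
  apply sum_antisymm
  intro i j
  have hconj : c j * (starRingEnd ℂ) (c i) = (starRingEnd ℂ) (c i * (starRingEnd ℂ) (c j)) := by
    rw [_root_.map_mul, Complex.conj_conj, mul_comm]
  rw [hconj, Complex.conj_im, hE j i]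
  ring


lemma re_sum_eq (E : Fin n → Fin n → ℝ) (d : Fin n → ℂ) :
    (∑ i, ∑ j, d i * (starRingEnd ℂ) (d j) * (E i j : ℂ)).re
      = (∑ i, ∑ j, (d i).re * (d j).re * E i j)
        + ∑ i, ∑ j, (d i).im * (d j).im * E i j := by
  rw [Complex.re_sum, ← Finset.sum_add_distrib]
  refine Finset.sum_congr rfl fun i _ => ?_
  rw [Complex.re_sum, ← Finset.sum_add_distrib]
  refine Finset.sum_congr rfl fun j _ => ?_
  simp only [Complex.mul_re, Complex.mul_im, Complex.conj_re, Complex.conj_im,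
    Complex.ofReal_re, Complex.ofReal_im]
  ring

lemma re_nonneg (E : Fin n → Fin n → ℝ) (hq : Qf E) (d : Fin n → ℂ) :
    0 ≤ (∑ i, ∑ j, d i * (starRingEnd ℂ) (d j) * (E i j : ℂ)).re := by
  rw [re_sum_eq]
  exact add_nonneg (hq _) (hq _)

end Stmt6Aux


/-- Schoenberg's theorem: if `ψ : G → ℝ` vanishes at the identity, is symmetric and
conditionally negative definite, then `g ↦ exp (-t ψ(g))` is positive definite for every
`t > 0`. -/
theorem stmt_6 {G : Type*} [Group G] (ψ : G → ℝ)
    (he : ψ 1 = 0) (hsymm : ∀ g : G, ψ g⁻¹ = ψ g)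
    (hcnd : ∀ (n : ℕ) (g : Fin n → G) (c : Fin n → ℂ), ∑ i, c i = 0 →
      (∑ i, ∑ j, c i * (starRingEnd ℂ) (c j) * (ψ ((g i)⁻¹ * g j) : ℂ)).re ≤ 0 ∧
      (∑ i, ∑ j, c i * (starRingEnd ℂ) (c j) * (ψ ((g i)⁻¹ * g j) : ℂ)).im = 0)
    (t : ℝ) (ht : 0 < t) (n : ℕ) (g : Fin n → G) (c : Fin n → ℂ) :
    0 ≤ (∑ i, ∑ j, c i * (starRingEnd ℂ) (c j) *
          (Real.exp (-t * ψ ((g i)⁻¹ * g j)) : ℂ)).re ∧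
    (∑ i, ∑ j, c i * (starRingEnd ℂ) (c j) *
          (Real.exp (-t * ψ ((g i)⁻¹ * g j)) : ℂ)).im = 0 := by
  classical
  have hAsymm : ∀ i j : Fin n, ψ ((g i)⁻¹ * g j) = ψ ((g j)⁻¹ * g i) := by
    intro i j
    have h1 : ((g i)⁻¹ * g j)⁻¹ = (g j)⁻¹ * g i := by group
    rw [← hsymm ((g i)⁻¹ * g j), h1]
  set B : Fin n → Fin n → ℝ := fun i j => ψ (g i) + ψ (g j) - ψ ((g i)⁻¹ * g j) with hBdef
  have hBsym : ∀ i j, B i j = B j i := by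
    intro i j
    simp only [hBdef, hAsymm i j]
    ring
  -- B is positive semidefinite
  have hB : (Matrix.of B).PosSemidef := by
    apply Stmt6Aux.posSemidef_of _ hBsym
    intro x
    set s : ℝ := ∑ i, x i with hs
    set r : Fin (n+1) → ℝ := Fin.cons (-s) x with hr
    set h : Fin (n+1) → G := Fin.cons 1 g with hh
    set d : Fin (n+1) → ℂ := fun i => ((r i : ℝ) : ℂ) with hd
    have hsum : ∑ i, d i = 0 := by
      have : ∑ i, d i = ((∑ i, r i : ℝ) : ℂ) := by push_cast; rfl
      rw [this, hr, Fin.sum_cons]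
      simp [hs]
    obtain ⟨hre, -⟩ := hcnd (n+1) h d hsum
    have hcast : ∀ i j : Fin (n+1), d i * (starRingEnd ℂ) (d j) * (ψ ((h i)⁻¹ * h j) : ℂ)
        = ((r i * r j * ψ ((h i)⁻¹ * h j) : ℝ) : ℂ) := by
      intro i j
      rw [hd]
      simp only [Complex.conj_ofReal]
      push_cast
      ring
    have hre' : ∑ i, ∑ j, r i * r j * ψ ((h i)⁻¹ * h j) ≤ 0 := by
      have : (∑ i, ∑ j, d i * (starRingEnd ℂ) (d j) * (ψ ((h i)⁻¹ * h j) : ℂ)).re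
          = ∑ i, ∑ j, r i * r j * ψ ((h i)⁻¹ * h j) := by
        simp_rw [hcast, ← Complex.ofReal_sum, Complex.ofReal_re]
      rwa [this] at hre
    -- expand the (n+1)-sums
    simp only [Fin.sum_univ_succ, hr, hh, Fin.cons_zero, Fin.cons_succ, inv_one, one_mul,
      mul_one, he, hsymm, mul_zero, zero_mul, add_zero, zero_add, neg_mul, mul_neg,
      neg_neg, Finset.sum_add_distrib, Finset.sum_neg_distrib] at hre'
    have h1 : ∑ i, x i * s * ψ (g i) = s * ∑ i, x i * ψ (g i) := by
      rw [Finset.mul_sum]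
      exact Finset.sum_congr rfl fun i _ => by ring
    have h2 : ∑ i, s * x i * ψ (g i) = s * ∑ i, x i * ψ (g i) := by
      rw [Finset.mul_sum]
      exact Finset.sum_congr rfl fun i _ => by ring
    have hA1 : ∑ i, ∑ j, x i * x j * ψ (g i) = s * ∑ i, x i * ψ (g i) := by
      rw [Finset.mul_sum]
      refine Finset.sum_congr rfl fun i _ => ?_
      calc ∑ j, x i * x j * ψ (g i) = ∑ j, x j * (x i * ψ (g i)) :=
            Finset.sum_congr rfl fun j _ => by ring
        _ = (∑ j, x j) * (x i * ψ (g i)) := by rw [Finset.sum_mul]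
        _ = s * (x i * ψ (g i)) := by rw [← hs]
    have hA2 : ∑ i, ∑ j, x i * x j * ψ (g j) = s * ∑ j, x j * ψ (g j) := by
      calc ∑ i, ∑ j, x i * x j * ψ (g j) = ∑ i, x i * ∑ j, x j * ψ (g j) := by
            refine Finset.sum_congr rfl fun i _ => ?_
            rw [Finset.mul_sum]
            exact Finset.sum_congr rfl fun j _ => by ring
        _ = (∑ i, x i) * ∑ j, x j * ψ (g j) := by rw [Finset.sum_mul]
        _ = s * ∑ j, x j * ψ (g j) := by rw [← hs]
    have h3 : ∑ i, ∑ j, x i * x j * B i j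
        = (s * ∑ i, x i * ψ (g i)) + (s * ∑ i, x i * ψ (g i))
          - ∑ i, ∑ j, x i * x j * ψ ((g i)⁻¹ * g j) := by
      calc ∑ i, ∑ j, x i * x j * B i j
          = ∑ i, ∑ j, (x i * x j * ψ (g i) + x i * x j * ψ (g j)
              - x i * x j * ψ ((g i)⁻¹ * g j)) :=
            Finset.sum_congr rfl fun i _ => Finset.sum_congr rfl fun j _ => by
              simp only [hBdef]; ring
        _ = (∑ i, ∑ j, x i * x j * ψ (g i)) + (∑ i, ∑ j, x i * x j * ψ (g j))
              - ∑ i, ∑ j, x i * x j * ψ ((g i)⁻¹ * g j) := by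
            simp only [Finset.sum_add_distrib, Finset.sum_sub_distrib]
        _ = _ := by rw [hA1, hA2]
    linarith [hre']

  -- positive definiteness of exp(t*B) as quadratic form
  have hq : Stmt6Aux.Qf (fun i j => Real.exp (t * B i j)) :=
    Stmt6Aux.qf_exp (Stmt6Aux.psd_smul ht.le hB)
  set d : Fin n → ℂ := fun i => c i * (Real.exp (-t * ψ (g i)) : ℂ) with hd
  have hterm : ∀ i j, c i * (starRingEnd ℂ) (c j) * (Real.exp (-t * ψ ((g i)⁻¹ * g j)) : ℂ)
      = d i * (starRingEnd ℂ) (d j) * ((Real.exp (t * B i j) : ℝ) : ℂ) := by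
    intro i j
    have hexp : Real.exp (-t * ψ (g i)) * (Real.exp (-t * ψ (g j)) * Real.exp (t * B i j))
        = Real.exp (-t * ψ ((g i)⁻¹ * g j)) := by
      rw [← Real.exp_add, ← Real.exp_add]
      congr 1
      simp only [hBdef]
      ring
    rw [hd]
    simp only [_root_.map_mul, Complex.conj_ofReal]
    rw [← hexp, Complex.ofReal_mul, Complex.ofReal_mul]
    ring
  constructor
  · rw [show (∑ i, ∑ j, c i * (starRingEnd ℂ) (c j) *
          (Real.exp (-t * ψ ((g i)⁻¹ * g j)) : ℂ))
        = ∑ i, ∑ j, d i * (starRingEnd ℂ) (d j) * ((Real.exp (t * B i j) : ℝ) : ℂ) from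
      Finset.sum_congr rfl fun i _ => Finset.sum_congr rfl fun j _ => hterm i j]
    exact Stmt6Aux.re_nonneg _ hq d
  · exact Stmt6Aux.im_zero (fun i j => Real.exp (-t * ψ ((g i)⁻¹ * g j)))
      (fun i j => by simp only [hAsymm i j]) c
end
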